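/- arXiv:1904.01468 — 4 statements merged into one kernel-verified Lean document; each statement's English description precedes it below -/
import Mathlib

section
/- For every λ > 0 and every x ∈ ℤ^d one has I_x(λ) > 0, where I_x(λ) = (2π)^{−d} ∫_{[−π,π]^d} cos(θ·x)/(λ − φ(θ)) dθ. -/
open MeasureTheory ENNReal

namespace IxPosAux


open Complex

variable {d : ℕ}

noncomputable def convPow (d : ℕ) (b : (Fin d → ℤ) → ℝ) : ℕ → (Fin d → ℤ) → ℝ
  | 0 => fun z => if z = 0 then 1 else 0
  | n+1 => fun z => ∑' w, convPow d b n w * b (z - w)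

noncomputable def phase (θ : Fin d → ℝ) (z : Fin d → ℤ) : ℂ :=
  Complex.exp ((∑ i, θ i * (z i : ℝ) : ℝ) * I)

lemma int1 (n : ℤ) : ∫ t in Set.Icc (-Real.pi) Real.pi, Complex.exp ((t * n : ℝ) * I)
    = if n = 0 then (2 * Real.pi : ℂ) else 0 := by
  rcases eq_or_ne n 0 with h | h
  · simp only [h, if_pos rfl]
    simp only [Int.cast_zero, mul_zero, Complex.ofReal_zero, zero_mul, Complex.exp_zero]
    rw [setIntegral_const]
    rw [measureReal_def, Real.volume_Icc]
    rw [ENNReal.toReal_ofReal (by linarith [Real.pi_pos] : (0:ℝ) ≤ Real.pi - -Real.pi)]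
    push_cast
    ring_nf
    norm_num
  · rw [if_neg h]
    rw [integral_Icc_eq_integral_Ioc,
      ← intervalIntegral.integral_of_le (by linarith [Real.pi_pos] : -Real.pi ≤ Real.pi)]
    have : (fun t : ℝ => Complex.exp ((t * n : ℝ) * I)) = fun t : ℝ => Complex.exp ((n * I) * t) := by
      funext t; push_cast; ring_nf
    rw [this]
    rw [integral_exp_mul_complex (by simp [h, Complex.ext_iff] : (n : ℂ) * I ≠ 0)]
    have h1 : (n : ℂ) * I * Real.pi = ((n * Real.pi : ℝ) : ℂ) * I := by push_cast; ring
    have h2 : (n : ℂ) * I * (-Real.pi : ℝ) = (-(n * Real.pi : ℝ) : ℂ) * I := by push_cast; ring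
    rw [h1, h2, Complex.exp_mul_I, Complex.exp_mul_I]
    have hs : Complex.sin ((n * Real.pi : ℝ)) = 0 := by
      rw [← Complex.ofReal_sin, Real.sin_int_mul_pi]; simp
    rw [Complex.cos_neg, Complex.sin_neg, hs]
    simp

lemma boxExp (d : ℕ) (y : Fin d → ℤ) :
    ∫ θ in Set.Icc (fun _ : Fin d => -Real.pi) (fun _ => Real.pi), phase θ y
    = if y = 0 then ((2 * Real.pi) ^ d : ℂ) else 0 := by
  simp only [phase]
  have key : ∀ θ : Fin d → ℝ, Complex.exp ((∑ i, θ i * (y i : ℝ) : ℝ) * I)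
      = ∏ i, Complex.exp ((θ i * (y i : ℝ) : ℝ) * I) := by
    intro θ
    rw [← Complex.exp_sum]
    congr 1
    push_cast
    rw [Finset.sum_mul]
  simp_rw [key]
  have ind : ∀ θ : Fin d → ℝ,
      (Set.Icc (fun _ : Fin d => -Real.pi) (fun _ => Real.pi)).indicator
        (fun θ => ∏ i, Complex.exp ((θ i * (y i : ℝ) : ℝ) * I)) θ
      = ∏ i, (Set.Icc (-Real.pi) Real.pi).indicator
          (fun t => Complex.exp ((t * (y i : ℝ) : ℝ) * I)) (θ i) := by
    intro θ
    by_cases h : θ ∈ Set.Icc (fun _ : Fin d => -Real.pi) (fun _ => Real.pi)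
    · rw [Set.indicator_of_mem h]
      rw [← Set.pi_univ_Icc] at h
      exact (Finset.prod_congr rfl fun i _ => (Set.indicator_of_mem (h i (Set.mem_univ i))
        (fun t => Complex.exp ((t * (y i : ℝ) : ℝ) * I))).symm)
    · rw [Set.indicator_of_notMem h]
      rw [← Set.pi_univ_Icc] at h
      simp only [Set.mem_pi, Set.mem_univ, forall_true_left, not_forall] at h
      obtain ⟨i, hi⟩ := h
      refine (Finset.prod_eq_zero (Finset.mem_univ i) ?_).symm
      rw [Set.indicator_of_notMem (by simpa using hi)]
  rw [← integral_indicator measurableSet_Icc]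
  simp_rw [ind]
  rw [integral_fintype_prod_volume_eq_prod (f := fun i t => (Set.Icc (-Real.pi) Real.pi).indicator
      (fun t => Complex.exp ((t * (y i : ℝ) : ℝ) * I)) t)]
  simp_rw [integral_indicator measurableSet_Icc, int1]
  rcases eq_or_ne y 0 with h | h
  · simp [h]
  · rw [if_neg h]
    obtain ⟨i, hi⟩ : ∃ i, y i ≠ 0 := by
      by_contra hc; push_neg at hc; exact h (funext hc)
    exact Finset.prod_eq_zero (Finset.mem_univ i) (by rw [if_neg hi])

variable {b : (Fin d → ℤ) → ℝ}

lemma phase_norm (θ : Fin d → ℝ) (z : Fin d → ℤ) : ‖phase θ z‖ = 1 :=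
  Complex.norm_exp_ofReal_mul_I _

lemma phase_add (θ : Fin d → ℝ) (z w : Fin d → ℤ) :
    phase θ (z + w) = phase θ z * phase θ w := by
  rw [phase, phase, phase, ← Complex.exp_add]
  congr 1
  push_cast
  rw [← add_mul]
  congr 1
  rw [← Finset.sum_add_distrib]
  congr 1; funext i; push_cast [Pi.add_apply]; ring

lemma summable_coeff_phase {c : (Fin d → ℤ) → ℝ} (hcs : Summable c) (hc0 : ∀ z, 0 ≤ c z)
    (θ : Fin d → ℝ) : Summable fun z => ‖(c z : ℂ) * phase θ z‖ := by
  refine hcs.abs.congr fun z => ?_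
  rw [norm_mul, phase_norm, mul_one, Complex.norm_real, Real.norm_eq_abs]

lemma convPow_nonneg (hb0 : ∀ z, 0 ≤ b z) : ∀ n z, 0 ≤ convPow d b n z := by
  intro n
  induction n with
  | zero => intro z; simp only [convPow]; split <;> norm_num
  | succ n ih => intro z; exact tsum_nonneg fun w => mul_nonneg (ih w) (hb0 _)

lemma convPow_succ_eq (n : ℕ) (z : Fin d → ℤ) :
    convPow d b (n+1) z = ∑' v, convPow d b n (z - v) * b v := by
  show (∑' w, convPow d b n w * b (z - w)) = _
  rw [← (Equiv.subLeft z).tsum_eq (fun w => convPow d b n w * b (z - w))]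
  simp [sub_sub_cancel]

lemma convPow_summable_prod (hb0 : ∀ z, 0 ≤ b z) (hbs : Summable b) {n : ℕ}
    (hcs : Summable (convPow d b n)) :
    Summable (fun q : ((Fin d → ℤ) × (Fin d → ℤ)) => convPow d b n (q.1 - q.2) * b q.2) := by
  have hprod : Summable (fun p : ((Fin d → ℤ) × (Fin d → ℤ)) => convPow d b n p.1 * b p.2) :=
    hcs.mul_of_nonneg hbs (fun w => convPow_nonneg hb0 n w) hb0
  let e : ((Fin d → ℤ) × (Fin d → ℤ)) ≃ ((Fin d → ℤ) × (Fin d → ℤ)) :=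
    ⟨fun p => (p.1 + p.2, p.2), fun q => (q.1 - q.2, q.2),
     fun p => by simp, fun q => by simp⟩
  have := (e.symm.summable_iff (f := fun p : ((Fin d → ℤ) × (Fin d → ℤ)) =>
    convPow d b n p.1 * b p.2)).mpr hprod
  simpa [e, Function.comp_def] using this

lemma convPow_summable (hb0 : ∀ z, 0 ≤ b z) (hbs : Summable b) :
    ∀ n, Summable (convPow d b n) := by
  intro n
  induction n with
  | zero =>
      apply summable_of_ne_finset_zero (s := {(0 : Fin d → ℤ)})
      intro z hz
      simp only [Finset.mem_singleton] at hz
      simp [convPow, hz]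
  | succ n ih =>
      have hprod2 := convPow_summable_prod hb0 hbs ih
      have h0 : (0 : ((Fin d → ℤ) × (Fin d → ℤ)) → ℝ) ≤ fun q =>
          convPow d b n (q.1 - q.2) * b q.2 :=
        fun q => mul_nonneg (convPow_nonneg hb0 n _) (hb0 _)
      have := ((summable_prod_of_nonneg h0).mp hprod2).2
      exact this.congr fun z => (convPow_succ_eq n z).symm

lemma convPow_fiber_summable (hb0 : ∀ z, 0 ≤ b z) (hbs : Summable b) {n : ℕ} (z : Fin d → ℤ) :
    Summable fun w => convPow d b n w * b (z - w) := by
  refine Summable.of_nonneg_of_le (fun w => mul_nonneg (convPow_nonneg hb0 n w) (hb0 _))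
    (fun w => mul_le_mul_of_nonneg_left (Summable.le_tsum hbs _ fun j _ => hb0 j)
      (convPow_nonneg hb0 n w))
    ((convPow_summable hb0 hbs n).mul_right (∑' v, b v))

lemma convPow_prod_le (hb0 : ∀ z, 0 ≤ b z) (hbs : Summable b) :
    ∀ (k : ℕ) (zs : Fin k → (Fin d → ℤ)), (∏ i, b (zs i)) ≤ convPow d b k (∑ i, zs i) := by
  intro k
  induction k with
  | zero => intro zs; simp [convPow]
  | succ n ih =>
      intro zs
      rw [Fin.prod_univ_castSucc, Fin.sum_univ_castSucc]
      have h1 : convPow d b n (∑ i : Fin n, zs i.castSucc) * b (zs (Fin.last n))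
          ≤ convPow d b (n+1) (∑ i : Fin n, zs i.castSucc + zs (Fin.last n)) := by
        have hsummable := convPow_fiber_summable hb0 hbs (n := n)
          (∑ i : Fin n, zs i.castSucc + zs (Fin.last n))
        have := Summable.le_tsum hsummable (∑ i : Fin n, zs i.castSucc)
          (fun j _ => mul_nonneg (convPow_nonneg hb0 n _) (hb0 _))
        simpa [convPow] using this
      calc (∏ i : Fin n, b (zs i.castSucc)) * b (zs (Fin.last n))
          ≤ convPow d b n (∑ i : Fin n, zs i.castSucc) * b (zs (Fin.last n)) :=
            mul_le_mul_of_nonneg_right (ih _) (hb0 _)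
        _ ≤ _ := h1

lemma convPow_exp (hb0 : ∀ z, 0 ≤ b z) (hbs : Summable b) (θ : Fin d → ℝ) (n : ℕ) :
    (∑' z, (b z : ℂ) * phase θ z) ^ n = ∑' z, (convPow d b n z : ℂ) * phase θ z := by
  induction n with
  | zero =>
      rw [pow_zero]
      rw [tsum_eq_single (0 : Fin d → ℤ) (by
        intro z hz
        simp [convPow, hz])]
      simp [convPow, phase]
  | succ n ih =>
      have hcs := convPow_summable hb0 hbs n
      have hc0 := convPow_nonneg hb0 n
      have hfn := summable_coeff_phase hcs hc0 θ
      have hgn := summable_coeff_phase hbs hb0 θ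
      rw [pow_succ, ih, tsum_mul_tsum_of_summable_norm hfn hgn]
      have hH : ∀ p : ((Fin d → ℤ) × (Fin d → ℤ)),
          ((convPow d b n p.1 : ℂ) * phase θ p.1) * ((b p.2 : ℂ) * phase θ p.2)
          = ((convPow d b n p.1 * b p.2 : ℝ) : ℂ) * phase θ (p.1 + p.2) := by
        intro p; rw [phase_add]; push_cast; ring
      simp_rw [hH]
      let e : ((Fin d → ℤ) × (Fin d → ℤ)) ≃ ((Fin d → ℤ) × (Fin d → ℤ)) :=
        ⟨fun p => (p.1 + p.2, p.2), fun q => (q.1 - q.2, q.2),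
         fun p => by simp, fun q => by simp⟩
      rw [← e.symm.tsum_eq (fun p : ((Fin d → ℤ) × (Fin d → ℤ)) =>
        ((convPow d b n p.1 * b p.2 : ℝ) : ℂ) * phase θ (p.1 + p.2))]
      have he : ∀ q : ((Fin d → ℤ) × (Fin d → ℤ)),
          ((convPow d b n (q.1 - q.2) * b q.2 : ℝ) : ℂ) * phase θ ((q.1 - q.2) + q.2)
          = ((convPow d b n (q.1 - q.2) * b q.2 : ℝ) : ℂ) * phase θ q.1 := by
        intro q; rw [sub_add_cancel]
      simp only [e, Equiv.coe_fn_symm_mk]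
      simp_rw [he]
      have hreal := convPow_summable_prod hb0 hbs hcs
      have hK : Summable (fun q : ((Fin d → ℤ) × (Fin d → ℤ)) =>
          ((convPow d b n (q.1 - q.2) * b q.2 : ℝ) : ℂ) * phase θ q.1) := by
        apply Summable.of_norm
        refine hreal.abs.congr fun q => ?_
        rw [norm_mul, phase_norm, mul_one, Complex.norm_real, Real.norm_eq_abs]
      rw [Summable.tsum_prod' hK (fun z => hK.prod_factor z)]
      congr 1
      funext z
      simp only
      rw [tsum_mul_right, ← Complex.ofReal_tsum, ← convPow_succ_eq]




noncomputable def modb (d : ℕ) (a : (Fin d → ℤ) → ℝ) (M : ℝ) : (Fin d → ℤ) → ℝ :=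
  fun z => a z + if z = 0 then M else 0

variable {a : (Fin d → ℤ) → ℝ} {M : ℝ}

lemma summable_ite_zero : Summable (fun z : Fin d → ℤ => if z = 0 then M else 0) := by
  apply summable_of_ne_finset_zero (s := {(0 : Fin d → ℤ)})
  intro z hz
  simp only [Finset.mem_singleton] at hz
  simp [hz]

lemma summable_modb (hsum : Summable fun z => |a z|) : Summable (modb d a M) :=
  hsum.of_abs.add summable_ite_zero

lemma tsum_modb (hsum : Summable fun z => |a z|) (htot : ∑' z, a z = 0) :
    ∑' z, modb d a M z = M := by
  simp only [modb]
  rw [Summable.tsum_add hsum.of_abs summable_ite_zero, htot,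
    tsum_eq_single (0 : Fin d → ℤ) (fun z hz => if_neg hz)]
  simp

lemma summable_modb_mul (hsum : Summable fun z => |a z|) {u : (Fin d → ℤ) → ℝ}
    (hu : ∀ z, |u z| ≤ 1) : Summable (fun z => modb d a M z * u z) := by
  apply Summable.of_abs
  refine Summable.of_nonneg_of_le (fun z => abs_nonneg _) (fun z => ?_)
    (summable_modb (M := M) hsum).abs
  rw [abs_mul]
  exact mul_le_of_le_one_right (abs_nonneg _) (hu z)

lemma summable_a_mul (hsum : Summable fun z => |a z|) {u : (Fin d → ℤ) → ℝ}
    (hu : ∀ z, |u z| ≤ 1) : Summable (fun z => a z * u z) := by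
  apply Summable.of_abs
  refine Summable.of_nonneg_of_le (fun z => abs_nonneg _) (fun z => ?_) hsum
  rw [abs_mul]
  exact mul_le_of_le_one_right (abs_nonneg _) (hu z)

lemma tsum_modb_cos (hsum : Summable fun z => |a z|) (θ : Fin d → ℝ) :
    ∑' z, modb d a M z * Real.cos (∑ i, θ i * (z i : ℝ))
      = (∑' z : Fin d → ℤ, a z * Real.cos (∑ i, θ i * (z i : ℝ))) + M := by
  have h : ∀ z : Fin d → ℤ, modb d a M z * Real.cos (∑ i, θ i * (z i : ℝ))
      = a z * Real.cos (∑ i, θ i * (z i : ℝ))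
        + (if z = 0 then M * Real.cos (∑ i, θ i * (z i : ℝ)) else 0) := by
    intro z
    simp only [modb]
    by_cases hz : z = 0 <;> simp [hz] <;> ring
  rw [tsum_congr h, Summable.tsum_add (summable_a_mul hsum fun z => Real.abs_cos_le_one _)
    (by
      apply summable_of_ne_finset_zero (s := {(0 : Fin d → ℤ)})
      intro z hz
      simp only [Finset.mem_singleton] at hz
      simp [hz]),
    tsum_eq_single (0 : Fin d → ℤ) (fun z hz => if_neg hz)]
  simp

lemma tsum_modb_sin (hsum : Summable fun z => |a z|) (hsymm : ∀ z, a z = a (-z))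
    (θ : Fin d → ℝ) :
    ∑' z, modb d a M z * Real.sin (∑ i, θ i * (z i : ℝ)) = 0 := by
  have hmb : ∀ z, modb d a M (-z) = modb d a M z := by
    intro z
    simp only [modb, neg_eq_zero, ← hsymm]
  have key := (Equiv.neg (Fin d → ℤ)).tsum_eq
    (fun z => modb d a M z * Real.sin (∑ i, θ i * (z i : ℝ)))
  have h2 : ∀ z : Fin d → ℤ,
      modb d a M (-z) * Real.sin (∑ i, θ i * ((-z) i : ℝ))
      = -(modb d a M z * Real.sin (∑ i, θ i * (z i : ℝ))) := by
    intro z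
    rw [hmb]
    have : (∑ i, θ i * ((-z) i : ℝ)) = -(∑ i, θ i * (z i : ℝ)) := by
      rw [← Finset.sum_neg_distrib]
      congr 1; funext i; push_cast [Pi.neg_apply]; ring
    rw [this, Real.sin_neg]
    ring
  simp only [Equiv.neg_apply] at key
  rw [tsum_congr h2, tsum_neg] at key
  linarith

lemma tsum_modb_phase (hsum : Summable fun z => |a z|) (hsymm : ∀ z, a z = a (-z))
    (θ : Fin d → ℝ) :
    ∑' z, (modb d a M z : ℂ) * phase θ z
      = (((∑' z : Fin d → ℤ, a z * Real.cos (∑ i, θ i * (z i : ℝ))) + M : ℝ) : ℂ) := by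
  have h : ∀ z : Fin d → ℤ, (modb d a M z : ℂ) * phase θ z
      = ((modb d a M z * Real.cos (∑ i, θ i * (z i : ℝ)) : ℝ) : ℂ)
        + ((modb d a M z * Real.sin (∑ i, θ i * (z i : ℝ)) : ℝ) : ℂ) * I := by
    intro z
    rw [phase, Complex.exp_mul_I, ← Complex.ofReal_cos, ← Complex.ofReal_sin]
    push_cast
    ring
  rw [tsum_congr h, Summable.tsum_add
    (Complex.summable_ofReal.mpr (summable_modb_mul hsum fun z => Real.abs_cos_le_one _))
    ((Complex.summable_ofReal.mpr (summable_modb_mul hsum fun z => Real.abs_sin_le_one _)).mul_right I),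
    tsum_mul_right, ← Complex.ofReal_tsum, ← Complex.ofReal_tsum,
    tsum_modb_sin hsum hsymm, tsum_modb_cos hsum]
  simp

lemma abs_tsum_modb_cos_le (hsum : Summable fun z => |a z|) (htot : ∑' z, a z = 0)
    (hb0 : ∀ z, 0 ≤ modb d a M z) (θ : Fin d → ℝ) :
    |(∑' z : Fin d → ℤ, a z * Real.cos (∑ i, θ i * (z i : ℝ))) + M| ≤ M := by
  rw [← tsum_modb_cos hsum]
  set f : (Fin d → ℤ) → ℝ := fun z => modb d a M z * Real.cos (∑ i, θ i * (z i : ℝ)) with hf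
  have h1 : Summable fun z => ‖f z‖ := by
    simpa [Real.norm_eq_abs, hf, abs_mul] using (summable_modb_mul (M := M) hsum
      fun z => Real.abs_cos_le_one _).abs
  calc |∑' z, f z| = ‖∑' z, f z‖ := (Real.norm_eq_abs _).symm
    _ ≤ ∑' z, ‖f z‖ := norm_tsum_le_tsum_norm h1
    _ ≤ ∑' z, modb d a M z := by
        refine Summable.tsum_le_tsum (fun z => ?_) h1 (summable_modb hsum)
        rw [Real.norm_eq_abs, hf, abs_mul, _root_.abs_of_nonneg (hb0 z)]
        exact mul_le_of_le_one_right (hb0 z) (Real.abs_cos_le_one _)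
    _ = M := tsum_modb hsum htot


lemma continuous_phase (z : Fin d → ℤ) : Continuous fun θ : Fin d → ℝ => phase θ z := by
  unfold phase
  exact Complex.continuous_exp.comp
    ((Complex.continuous_ofReal.comp
      (continuous_finset_sum _ fun i _ => (continuous_apply i).mul continuous_const)).mul
      continuous_const)

lemma continuous_cosx (x : Fin d → ℤ) :
    Continuous fun θ : Fin d → ℝ => Real.cos (∑ i, θ i * (x i : ℝ)) :=
  Real.continuous_cos.comp
    (continuous_finset_sum _ fun i _ => (continuous_apply i).mul continuous_const)

lemma volume_box (d : ℕ) :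
    volume (Set.Icc (fun _ : Fin d => -Real.pi) (fun _ => Real.pi))
      = ENNReal.ofReal ((2 * Real.pi) ^ d) := by
  rw [Real.volume_Icc_pi, Finset.prod_const, Finset.card_univ, Fintype.card_fin,
    ← ENNReal.ofReal_pow (by linarith [Real.pi_pos])]
  congr 1
  ring

lemma volume_box_ne_top (d : ℕ) :
    volume (Set.Icc (fun _ : Fin d => -Real.pi) (fun _ => Real.pi)) ≠ ⊤ := by
  rw [volume_box]; exact ENNReal.ofReal_ne_top

lemma volume_box_toReal (d : ℕ) :
    (volume (Set.Icc (fun _ : Fin d => -Real.pi) (fun _ => Real.pi))).toReal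
      = (2 * Real.pi) ^ d := by
  rw [volume_box, ENNReal.toReal_ofReal (by positivity)]

lemma cos_mul_phase (x z : Fin d → ℤ) (θ : Fin d → ℝ) :
    (Real.cos (∑ i, θ i * (x i : ℝ)) : ℂ) * phase θ z
      = (phase θ (x + z) + phase θ (-x + z)) / 2 := by
  rw [phase_add, phase_add]
  have hneg : phase θ (-x) = Complex.exp (-((∑ i, θ i * (x i : ℝ) : ℝ) : ℂ) * I) := by
    rw [phase]
    congr 2
    push_cast [Pi.neg_apply]
    rw [← Finset.sum_neg_distrib]
    congr 1; funext i; ring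
  have h2 : (Real.cos (∑ i, θ i * (x i : ℝ)) : ℂ) = (phase θ x + phase θ (-x)) / 2 := by
    rw [Complex.ofReal_cos, phase, hneg, eq_div_iff (two_ne_zero' ℂ), mul_comm]
    exact Complex.two_cos _
  rw [h2]
  ring

lemma box_integral_cos_pow (hb0 : ∀ z, 0 ≤ b z) (hbs : Summable b)
    (g : (Fin d → ℝ) → ℝ) (hg : ∀ θ, ((g θ : ℝ) : ℂ) = ∑' z, (b z : ℂ) * phase θ z)
    (x : Fin d → ℤ) (n : ℕ) :
    ∫ θ in Set.Icc (fun _ : Fin d => -Real.pi) (fun _ => Real.pi),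
        Real.cos (∑ i, θ i * (x i : ℝ)) * (g θ) ^ n
      = (2 * Real.pi) ^ d * ((convPow d b n x + convPow d b n (-x)) / 2) := by
  classical
  set box := Set.Icc (fun _ : Fin d => -Real.pi) (fun _ => Real.pi) with hbox
  set c := convPow d b n with hc
  have hcs : Summable c := convPow_summable hb0 hbs n
  have hc0 : ∀ z, 0 ≤ c z := fun z => convPow_nonneg hb0 n z
  set F : (Fin d → ℤ) → (Fin d → ℝ) → ℂ :=
    fun z θ => (c z : ℂ) * ((Real.cos (∑ i, θ i * (x i : ℝ)) : ℂ) * phase θ z) with hF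
  have hFcont : ∀ z, Continuous (F z) := by
    intro z
    exact continuous_const.mul
      ((Complex.continuous_ofReal.comp (continuous_cosx x)).mul (continuous_phase z))
  have hFint : ∀ z, Integrable (F z) (volume.restrict box) := by
    intro z
    exact (hFcont z).integrableOn_Icc
  have hFnorm : ∀ z θ, ‖F z θ‖ ≤ c z := by
    intro z θ
    rw [hF]
    simp only [norm_mul, phase_norm, mul_one, Complex.norm_real, Real.norm_eq_abs]
    rw [_root_.abs_of_nonneg (hc0 z)]
    exact mul_le_of_le_one_right (hc0 z) (Real.abs_cos_le_one _)
  have hFnormint : ∀ z, (∫ θ in box, ‖F z θ‖) ≤ (2 * Real.pi) ^ d * c z := by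
    intro z
    calc (∫ θ in box, ‖F z θ‖) ≤ ∫ _ in box, c z := by
          refine integral_mono ((hFint z).norm) ?_ (fun θ => hFnorm z θ)
          exact integrableOn_const (volume_box_ne_top d)
      _ = (2 * Real.pi) ^ d * c z := by
          rw [setIntegral_const, smul_eq_mul, measureReal_def, volume_box_toReal]
  have hFsum : Summable fun z => ∫ θ in box, ‖F z θ‖ :=
    Summable.of_nonneg_of_le (fun z => integral_nonneg fun θ => norm_nonneg _)
      hFnormint (hcs.mul_left _)
  -- step : complex version
  have hpt : ∀ θ : Fin d → ℝ, ((Real.cos (∑ i, θ i * (x i : ℝ)) * (g θ) ^ n : ℝ) : ℂ)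
      = ∑' z, F z θ := by
    intro θ
    rw [Complex.ofReal_mul, Complex.ofReal_pow, hg θ, convPow_exp hb0 hbs θ n, ← tsum_mul_left]
    congr 1
    funext z
    rw [hF]
    ring
  have key : (∫ θ in box, ((Real.cos (∑ i, θ i * (x i : ℝ)) * (g θ) ^ n : ℝ) : ℂ))
      = ∑' z, ∫ θ in box, F z θ := by
    simp_rw [hpt]
    exact (integral_tsum_of_summable_integral_norm hFint hFsum).symm
  have hFz : ∀ z, (∫ θ in box, F z θ)
      = (c z : ℂ) * (((if x + z = 0 then ((2 * Real.pi) ^ d : ℂ) else 0)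
          + (if -x + z = 0 then ((2 * Real.pi) ^ d : ℂ) else 0)) / 2) := by
    intro z
    rw [hF]
    simp only
    rw [integral_const_mul]
    congr 1
    have : ∀ θ, (Real.cos (∑ i, θ i * (x i : ℝ)) : ℂ) * phase θ z
        = phase θ (x + z) / 2 + phase θ (-x + z) / 2 := by
      intro θ; rw [cos_mul_phase]; ring
    simp_rw [this]
    rw [integral_add (((continuous_phase (x+z)).integrableOn_Icc).div_const 2)
      (((continuous_phase (-x+z)).integrableOn_Icc).div_const 2)]
    rw [integral_div, integral_div, boxExp, boxExp]
    ring
  have hsingle : ∀ z : Fin d → ℤ,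
      (c z : ℂ) * (((if x + z = 0 then ((2 * Real.pi) ^ d : ℂ) else 0)
          + (if -x + z = 0 then ((2 * Real.pi) ^ d : ℂ) else 0)) / 2)
      = (if z = -x then (c (-x) : ℂ) * ((2 * Real.pi) ^ d : ℂ) / 2 else 0)
        + (if z = x then (c x : ℂ) * ((2 * Real.pi) ^ d : ℂ) / 2 else 0) := by
    intro z
    have e1 : (x + z = 0) ↔ (z = -x) := by
      constructor
      · intro h; rw [← neg_eq_of_add_eq_zero_right h]
      · intro h; rw [h]; ring
    have e2 : (-x + z = 0) ↔ (z = x) := by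
      constructor
      · intro h; have := neg_eq_of_add_eq_zero_right h; rw [← this]; ring
      · intro h; rw [h]; ring
    rw [show (if x + z = 0 then ((2 * Real.pi) ^ d : ℂ) else 0)
        = (if z = -x then ((2 * Real.pi) ^ d : ℂ) else 0) from by simp only [e1],
      show (if -x + z = 0 then ((2 * Real.pi) ^ d : ℂ) else 0)
        = (if z = x then ((2 * Real.pi) ^ d : ℂ) else 0) from by simp only [e2]]
    by_cases h1 : z = -x <;> by_cases h2 : z = x
    · have hx : (-x : Fin d → ℤ) = x := h1.symm.trans h2
      rw [if_pos h1, if_pos h2, if_pos h1, if_pos h2, h1, hx]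
      ring
    · rw [if_pos h1, if_neg h2, if_pos h1, if_neg h2, h1]
      ring
    · rw [if_neg h1, if_pos h2, if_neg h1, if_pos h2, h2]
      ring
    · rw [if_neg h1, if_neg h2, if_neg h1, if_neg h2]
      ring
  have key2 : ((∫ θ in box, Real.cos (∑ i, θ i * (x i : ℝ)) * (g θ) ^ n : ℝ) : ℂ)
      = (((2 * Real.pi) ^ d * ((c x + c (-x)) / 2) : ℝ) : ℂ) := by
    rw [show ((∫ θ in box, Real.cos (∑ i, θ i * (x i : ℝ)) * (g θ) ^ n : ℝ) : ℂ)
        = (∫ θ in box, ((Real.cos (∑ i, θ i * (x i : ℝ)) * (g θ) ^ n : ℝ) : ℂ)) from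
      (integral_ofReal (𝕜 := ℂ)).symm]
    rw [key]
    simp_rw [hFz, hsingle]
    rw [Summable.tsum_add
      (summable_of_ne_finset_zero (s := {-x}) (by intro z hz; simp only [Finset.mem_singleton] at hz; simp [hz]))
      (summable_of_ne_finset_zero (s := {x}) (by intro z hz; simp only [Finset.mem_singleton] at hz; simp [hz]))]
    rw [tsum_ite_eq, tsum_ite_eq]
    push_cast
    ring
  exact_mod_cast key2


end IxPosAux

open IxPosAux

/-- For every `λ > 0` and every `x ∈ ℤ^d`, the Green-function integral `I_x(λ)` is
strictly positive. -/
theorem Ix_pos (d : ℕ) (hd : 1 ≤ d) (a : (Fin d → ℤ) → ℝ)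
    (hsymm : ∀ z, a z = a (-z))
    (hnonneg : ∀ z, z ≠ 0 → 0 ≤ a z)
    (hneg : a 0 < 0)
    (hsum : Summable fun z => |a z|)
    (htot : ∑' z, a z = 0)
    (hirr : ∀ z : Fin d → ℤ, ∃ (k : ℕ) (zs : Fin k → Fin d → ℤ),
      z = ∑ i, zs i ∧ ∀ i, a (zs i) ≠ 0)
    (phi : (Fin d → ℝ) → ℝ)
    (hphi : ∀ θ, phi θ = ∑' z : Fin d → ℤ, a z * Real.cos (∑ i, θ i * (z i : ℝ)))
    (I : ℝ → (Fin d → ℤ) → ℝ)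
    (hI : ∀ (lam : ℝ) (x : Fin d → ℤ), I lam x = ((2 * Real.pi) ^ d)⁻¹ *
      ∫ θ in Set.Icc (fun _ : Fin d => -Real.pi) (fun _ : Fin d => Real.pi),
        Real.cos (∑ i, θ i * (x i : ℝ)) / (lam - phi θ)) :
    ∀ (lam : ℝ), 0 < lam → ∀ x : Fin d → ℤ, 0 < I lam x := by
  intro lam hlam x
  classical
  set M : ℝ := 1 - a 0 with hM
  have hMpos : 0 < M := by rw [hM]; linarith
  set b : (Fin d → ℤ) → ℝ := modb d a M with hbdef
  have hb0 : ∀ z, 0 ≤ b z := by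
    intro z
    by_cases hz : z = 0
    · subst hz
      have hb : b 0 = 1 := by
        show a 0 + (if (0 : Fin d → ℤ) = 0 then M else 0) = 1
        rw [if_pos rfl, hM]; ring
      rw [hb]; norm_num
    · show 0 ≤ a z + (if z = 0 then M else 0)
      rw [if_neg hz, add_zero]; exact hnonneg z hz
  have hbs : Summable b := summable_modb hsum
  have hg : ∀ θ, ((phi θ + M : ℝ) : ℂ) = ∑' z, (b z : ℂ) * phase θ z := by
    intro θ
    rw [tsum_modb_phase hsum hsymm θ, hphi θ]
  have habs : ∀ θ, |phi θ + M| ≤ M := by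
    intro θ
    rw [hphi θ]
    exact abs_tsum_modb_cos_le hsum htot hb0 θ
  have hphi_le : ∀ θ, phi θ ≤ 0 := by
    intro θ
    have h := habs θ
    rw [abs_le] at h
    linarith [h.2]
  have hlamphi : ∀ θ, 0 < lam - phi θ := fun θ => by linarith [hphi_le θ]
  have hphic : Continuous phi := by
    have hre : phi = fun θ => ∑' z : Fin d → ℤ, a z * Real.cos (∑ i, θ i * (z i : ℝ)) :=
      funext hphi
    rw [hre]
    refine continuous_tsum (fun z => continuous_const.mul (continuous_cosx z)) hsum ?_
    intro z θ
    rw [Real.norm_eq_abs, abs_mul]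
    exact mul_le_of_le_one_right (abs_nonneg _) (Real.abs_cos_le_one _)
  have hlamM : 0 < lam + M := by linarith
  set box := Set.Icc (fun _ : Fin d => -Real.pi) (fun _ : Fin d => Real.pi) with hbox
  set r : ℝ := M / (lam + M) with hr
  have hr0 : 0 ≤ r := div_nonneg hMpos.le hlamM.le
  have hr1 : r < 1 := (div_lt_one hlamM).mpr (by linarith)
  set f : ℕ → (Fin d → ℝ) → ℝ := fun n θ =>
    ((lam + M) ^ (n+1))⁻¹ * (Real.cos (∑ i, θ i * (x i : ℝ)) * (phi θ + M) ^ n) with hf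
  have hfc : ∀ n, Continuous (f n) := by
    intro n
    exact continuous_const.mul ((continuous_cosx x).mul ((hphic.add continuous_const).pow n))
  have hfint : ∀ n, Integrable (f n) (volume.restrict box) := fun n => (hfc n).integrableOn_Icc
  have hptb : ∀ n θ, ‖f n θ‖ ≤ ((lam + M))⁻¹ * r ^ n := by
    intro n θ
    have h1 : ‖f n θ‖ = ((lam + M) ^ (n+1))⁻¹ *
        (|Real.cos (∑ i, θ i * (x i : ℝ))| * |phi θ + M| ^ n) := by
      rw [Real.norm_eq_abs, abs_mul, abs_mul, abs_pow, abs_inv, abs_pow,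
        _root_.abs_of_pos hlamM]
    rw [h1]
    have h2 : |Real.cos (∑ i, θ i * (x i : ℝ))| * |phi θ + M| ^ n ≤ 1 * M ^ n :=
      mul_le_mul (Real.abs_cos_le_one _) (pow_le_pow_left₀ (abs_nonneg _) (habs θ) n)
        (pow_nonneg (abs_nonneg _) n) zero_le_one
    calc ((lam + M) ^ (n+1))⁻¹ * (|Real.cos (∑ i, θ i * (x i : ℝ))| * |phi θ + M| ^ n)
        ≤ ((lam + M) ^ (n+1))⁻¹ * (1 * M ^ n) := by
          exact mul_le_mul_of_nonneg_left h2 (by positivity)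
      _ = ((lam + M))⁻¹ * r ^ n := by
          rw [hr, div_pow, one_mul, pow_succ]
          field_simp
  have hfbound : ∀ n, (∫ θ in box, ‖f n θ‖) ≤ ((2 * Real.pi) ^ d * ((lam + M))⁻¹) * r ^ n := by
    intro n
    calc (∫ θ in box, ‖f n θ‖) ≤ ∫ _ in box, ((lam + M))⁻¹ * r ^ n := by
          refine integral_mono (hfint n).norm ?_ (fun θ => hptb n θ)
          exact integrableOn_const (volume_box_ne_top d)
      _ = ((2 * Real.pi) ^ d * ((lam + M))⁻¹) * r ^ n := by
          rw [setIntegral_const, smul_eq_mul, hbox, measureReal_def, volume_box_toReal d]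
          ring
  have hfnormsum : Summable (fun n => ∫ θ in box, ‖f n θ‖) :=
    Summable.of_nonneg_of_le (fun n => integral_nonneg fun θ => norm_nonneg _) hfbound
      ((summable_geometric_of_lt_one hr0 hr1).mul_left _)
  have hswap := integral_tsum_of_summable_integral_norm hfint hfnormsum
  have hpt : ∀ θ, (∑' n, f n θ) = Real.cos (∑ i, θ i * (x i : ℝ)) / (lam - phi θ) := by
    intro θ
    have hgabs : |(phi θ + M) / (lam + M)| < 1 := by
      rw [abs_div, _root_.abs_of_pos hlamM]
      exact (div_lt_one hlamM).mpr (lt_of_le_of_lt (habs θ) (by linarith))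
    have hgeo := tsum_geometric_of_abs_lt_one hgabs
    have hterm : ∀ n, f n θ = (Real.cos (∑ i, θ i * (x i : ℝ)) / (lam + M))
        * ((phi θ + M) / (lam + M)) ^ n := by
      intro n
      rw [hf]
      simp only
      rw [div_pow, div_mul_div_comm, inv_mul_eq_div]
      congr 1
      rw [pow_succ']
    rw [tsum_congr hterm, tsum_mul_left, hgeo]
    have heq1 : (1 : ℝ) - (phi θ + M) / (lam + M) = (lam - phi θ) / (lam + M) := by
      field_simp
      ring
    rw [heq1, inv_div]
    have h1 : lam + M ≠ 0 := ne_of_gt hlamM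
    have h2 : lam - phi θ ≠ 0 := ne_of_gt (hlamphi θ)
    field_simp
  have hA : (∫ θ in box, Real.cos (∑ i, θ i * (x i : ℝ)) / (lam - phi θ))
      = ∑' n, ∫ θ in box, f n θ := by
    rw [hswap]
    congr 1
    funext θ
    rw [hpt θ]
  have hTn : ∀ n, (∫ θ in box, f n θ) = ((lam + M) ^ (n+1))⁻¹ *
      ((2 * Real.pi) ^ d * ((convPow d b n x + convPow d b n (-x)) / 2)) := by
    intro n
    rw [hf]
    simp only
    rw [integral_const_mul]
    congr 1
    exact box_integral_cos_pow hb0 hbs (fun θ => phi θ + M) hg x n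
  have hTnonneg : ∀ n, 0 ≤ ∫ θ in box, f n θ := by
    intro n
    rw [hTn n]
    have h1 := convPow_nonneg hb0 n x
    have h2 := convPow_nonneg hb0 n (-x)
    positivity
  have hTsum : Summable (fun n => ∫ θ in box, f n θ) := by
    refine Summable.of_nonneg_of_le hTnonneg (fun n => ?_) hfnormsum
    exact integral_mono (hfint n) (hfint n).norm (fun θ => le_abs_self _)
  obtain ⟨k, zs, hxk, hne⟩ := hirr x
  have hbpos : ∀ i, 0 < b (zs i) := by
    intro i
    by_cases hz : zs i = 0
    · rw [hz]
      have hb : b 0 = 1 := by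
        show a 0 + (if (0 : Fin d → ℤ) = 0 then M else 0) = 1
        rw [if_pos rfl, hM]; ring
      rw [hb]; norm_num
    · show 0 < a (zs i) + (if zs i = 0 then M else 0)
      rw [if_neg hz, add_zero]
      exact lt_of_le_of_ne (hnonneg _ hz) (Ne.symm (hne i))
  have hckx : 0 < convPow d b k x := by
    have h1 : (∏ i, b (zs i)) ≤ convPow d b k (∑ i, zs i) := convPow_prod_le hb0 hbs k zs
    have h2 : 0 < ∏ i, b (zs i) := Finset.prod_pos (fun i _ => hbpos i)
    rw [← hxk] at h1
    linarith
  have hTk : 0 < ∫ θ in box, f k θ := by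
    rw [hTn k]
    have h2 := convPow_nonneg hb0 k (-x)
    have h3 : 0 < (convPow d b k x + convPow d b k (-x)) / 2 := by linarith
    positivity
  have hpos : 0 < ∑' n, ∫ θ in box, f n θ := Summable.tsum_pos hTsum hTnonneg k hTk
  rw [hI lam x, hA]
  have hpi : (0:ℝ) < ((2 * Real.pi) ^ d)⁻¹ := by positivity
  exact mul_pos hpi hpos
end

section
/- A number λ > 0 is an eigenvalue of the operator H on ℓ²(ℤ^d) (i.e. there exists a non-zero f ∈ ℓ²(ℤ^d) with H f = λ f) if and only if the system of N linear equations v_i = ∑_{j=1}^N β_j · v_j · I_{x_j − x_i}(λ), i = 1, …, N, has a non-trivial solution (v_1, …, v_N) ∈ ℝ^N. -/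
open MeasureTheory ENNReal

namespace EigenAux

noncomputable section

variable {d : ℕ}

def box (d : ℕ) : Set (Fin d → ℝ) :=
  Set.Icc (fun _ => -Real.pi) (fun _ => Real.pi)

lemma mem_box_iff (θ : Fin d → ℝ) :
    θ ∈ box d ↔ ∀ i, θ i ∈ Set.Icc (-Real.pi) Real.pi := by
  simp [box, Set.mem_Icc, Pi.le_def, forall_and]

lemma measurableSet_box : MeasurableSet (box d) := measurableSet_Icc

lemma integrable_box {E : Type*} [NormedAddCommGroup E] {f : (Fin d → ℝ) → E}
    (hf : Continuous f) : IntegrableOn f (box d) :=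
  hf.integrableOn_Icc

lemma int_exp_Icc (n : ℤ) :
    (∫ t in Set.Icc (-Real.pi) Real.pi, Complex.exp (Complex.I * n * t))
      = if n = 0 then ((2 * Real.pi : ℝ) : ℂ) else 0 := by
  rcases eq_or_ne n 0 with hn | hn
  · subst hn
    simp only [Int.cast_zero, mul_zero, zero_mul, Complex.exp_zero, if_pos rfl]
    rw [setIntegral_const, measureReal_def, Real.volume_Icc]
    rw [show Real.pi - -Real.pi = 2 * Real.pi by ring,
      ENNReal.toReal_ofReal Real.two_pi_pos.le, Complex.real_smul, mul_one]
    simp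
  · rw [if_neg hn]
    have hc : Complex.I * n ≠ 0 :=
      mul_ne_zero Complex.I_ne_zero (by exact_mod_cast hn)
    have hle : (-Real.pi : ℝ) ≤ Real.pi := by linarith [Real.pi_pos]
    rw [integral_Icc_eq_integral_Ioc, ← intervalIntegral.integral_of_le hle]
    rw [integral_exp_mul_complex hc]
    have hval : ∀ s : ℝ, Complex.exp (Complex.I * n * s)
        = (Real.cos (n * s) : ℝ) + (Real.sin (n * s) : ℝ) * Complex.I := by
      intro s
      have h1 : Complex.I * n * s = ((n * s : ℝ) : ℂ) * Complex.I := by push_cast; ring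
      rw [h1, Complex.exp_mul_I, ← Complex.ofReal_cos, ← Complex.ofReal_sin]
    rw [hval, hval]
    rw [show ((n : ℝ) * -Real.pi) = -((n:ℝ) * Real.pi) by ring, Real.cos_neg, Real.sin_neg]
    have hs : Real.sin ((n:ℝ) * Real.pi) = 0 := Real.sin_int_mul_pi n
    rw [hs]
    simp

lemma indicator_box_prod (g : Fin d → ℝ → ℂ) (θ : Fin d → ℝ) :
    (box d).indicator (fun θ => ∏ i, g i (θ i)) θ
      = ∏ i, (Set.Icc (-Real.pi) Real.pi).indicator (g i) (θ i) := by
  by_cases h : θ ∈ box d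
  · rw [Set.indicator_of_mem h]
    refine Finset.prod_congr rfl fun i _ => ?_
    rw [Set.indicator_of_mem ((mem_box_iff θ).1 h i)]
  · rw [Set.indicator_of_notMem h]
    obtain ⟨i, hi⟩ := not_forall.1 (fun hh => h ((mem_box_iff θ).2 hh))
    exact (Finset.prod_eq_zero (Finset.mem_univ i)
      (Set.indicator_of_notMem hi _)).symm

lemma int_cexp_box (u : Fin d → ℤ) :
    (∫ θ in box d, Complex.exp (Complex.I * ((∑ i, θ i * (u i : ℝ) : ℝ) : ℂ)))
      = if u = 0 then (((2 * Real.pi) ^ d : ℝ) : ℂ) else 0 := by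
  have hprod : ∀ θ : Fin d → ℝ,
      Complex.exp (Complex.I * ((∑ i, θ i * (u i : ℝ) : ℝ) : ℂ))
        = ∏ i, Complex.exp (Complex.I * (u i : ℂ) * (θ i : ℂ)) := by
    intro θ
    rw [← Complex.exp_sum]
    congr 1
    push_cast
    rw [Finset.mul_sum]
    refine Finset.sum_congr rfl fun i _ => by ring
  calc (∫ θ in box d, Complex.exp (Complex.I * ((∑ i, θ i * (u i : ℝ) : ℝ) : ℂ)))
      = ∫ θ in box d, ∏ i, Complex.exp (Complex.I * (u i : ℂ) * (θ i : ℂ)) := by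
        refine setIntegral_congr_fun measurableSet_box fun θ _ => hprod θ
    _ = ∫ θ : Fin d → ℝ, (box d).indicator
          (fun θ => ∏ i, Complex.exp (Complex.I * (u i : ℂ) * (θ i : ℂ))) θ := by
        rw [integral_indicator measurableSet_box]
    _ = ∫ θ : Fin d → ℝ, ∏ i, (Set.Icc (-Real.pi) Real.pi).indicator
          (fun t => Complex.exp (Complex.I * (u i : ℂ) * (t : ℂ))) (θ i) := by
        refine integral_congr_ae (Filter.Eventually.of_forall fun θ => ?_)
        exact indicator_box_prod (fun i t => Complex.exp (Complex.I * (u i : ℂ) * (t : ℂ))) θ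
    _ = ∏ i, ∫ t : ℝ, (Set.Icc (-Real.pi) Real.pi).indicator
          (fun t => Complex.exp (Complex.I * (u i : ℂ) * (t : ℂ))) t := by
        exact MeasureTheory.integral_fintype_prod_eq_prod (ι := Fin d) _
    _ = ∏ i, (if u i = 0 then ((2 * Real.pi : ℝ) : ℂ) else 0) := by
        refine Finset.prod_congr rfl fun i _ => ?_
        rw [integral_indicator measurableSet_Icc]
        exact int_exp_Icc (u i)
    _ = if u = 0 then (((2 * Real.pi) ^ d : ℝ) : ℂ) else 0 := by
        by_cases hu : u = 0
        · rw [if_pos hu]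
          subst hu
          simp [Finset.prod_const]
        · rw [if_neg hu]
          obtain ⟨i, hi⟩ := Function.ne_iff.1 hu
          exact Finset.prod_eq_zero (Finset.mem_univ i) (if_neg hi)

lemma integral_cos_box (u : Fin d → ℤ) :
    (∫ θ in box d, Real.cos (∑ i, θ i * (u i : ℝ)))
      = if u = 0 then (2 * Real.pi) ^ d else 0 := by
  have hcont : Continuous fun θ : Fin d → ℝ =>
      Complex.exp (Complex.I * ((∑ i, θ i * (u i : ℝ) : ℝ) : ℂ)) := by
    fun_prop
  have hint : IntegrableOn (fun θ : Fin d → ℝ =>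
      Complex.exp (Complex.I * ((∑ i, θ i * (u i : ℝ) : ℝ) : ℂ))) (box d) :=
    integrable_box hcont
  have hre : ∀ θ : Fin d → ℝ, Real.cos (∑ i, θ i * (u i : ℝ))
      = (Complex.exp (Complex.I * ((∑ i, θ i * (u i : ℝ) : ℝ) : ℂ))).re := by
    intro θ
    rw [mul_comm, Complex.exp_ofReal_mul_I_re]
  calc (∫ θ in box d, Real.cos (∑ i, θ i * (u i : ℝ)))
      = ∫ θ in box d,
          (Complex.exp (Complex.I * ((∑ i, θ i * (u i : ℝ) : ℝ) : ℂ))).re := by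
        refine setIntegral_congr_fun measurableSet_box fun θ _ => hre θ
    _ = (∫ θ in box d,
          Complex.exp (Complex.I * ((∑ i, θ i * (u i : ℝ) : ℝ) : ℂ))).re :=
        (integral_re hint)
    _ = if u = 0 then (2 * Real.pi) ^ d else 0 := by
        rw [int_cexp_box]
        by_cases hu : u = 0 <;> simp [hu]
        rw [← Complex.ofReal_ofNat, ← Complex.ofReal_mul, ← Complex.ofReal_pow, Complex.ofReal_re]

variable {a : (Fin d → ℤ) → ℝ} {phi : (Fin d → ℝ) → ℝ}

lemma summable_cos (hsum : Summable fun z => |a z|) (c : (Fin d → ℤ) → ℝ)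
    (hc : ∀ z, |c z| ≤ 1) :
    Summable fun z : Fin d → ℤ => a z * c z := by
  refine Summable.of_norm_bounded hsum fun z => ?_
  rw [Real.norm_eq_abs, abs_mul]
  calc |a z| * |c z| ≤ |a z| * 1 := mul_le_mul_of_nonneg_left (hc z) (abs_nonneg _)
  _ = |a z| := mul_one _

lemma phi_cont (hsum : Summable fun z => |a z|)
    (hphi : ∀ θ, phi θ = ∑' z : Fin d → ℤ, a z * Real.cos (∑ i, θ i * (z i : ℝ))) :
    Continuous phi := by
  have h : phi = fun θ => ∑' z : Fin d → ℤ, a z * Real.cos (∑ i, θ i * (z i : ℝ)) :=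
    funext hphi
  rw [h]
  refine continuous_tsum (fun z => by fun_prop) hsum fun z θ => ?_
  rw [Real.norm_eq_abs, abs_mul]
  calc |a z| * |Real.cos (∑ i, θ i * (z i : ℝ))| ≤ |a z| * 1 :=
        mul_le_mul_of_nonneg_left (Real.abs_cos_le_one _) (abs_nonneg _)
  _ = |a z| := mul_one _

lemma phi_le (hnonneg : ∀ z, z ≠ 0 → 0 ≤ a z) (hsum : Summable fun z => |a z|)
    (htot : ∑' z, a z = 0)
    (hphi : ∀ θ, phi θ = ∑' z : Fin d → ℤ, a z * Real.cos (∑ i, θ i * (z i : ℝ)))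
    (θ : Fin d → ℝ) : phi θ ≤ 0 := by
  rw [hphi θ, ← htot]
  refine Summable.tsum_le_tsum (fun z => ?_)
    (summable_cos hsum _ fun z => Real.abs_cos_le_one _) (summable_abs_iff.mp hsum)
  rcases eq_or_ne z 0 with rfl | hz
  · simp
  · calc a z * Real.cos (∑ i, θ i * (z i : ℝ)) ≤ a z * 1 :=
        mul_le_mul_of_nonneg_left (Real.cos_le_one _) (hnonneg z hz)
    _ = a z := mul_one _

lemma sin_sum_zero (hsymm : ∀ z, a z = a (-z)) (hsum : Summable fun z => |a z|)
    (θ : Fin d → ℝ) :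
    ∑' z : Fin d → ℤ, a z * Real.sin (∑ i, θ i * (z i : ℝ)) = 0 := by
  set f : (Fin d → ℤ) → ℝ := fun z => a z * Real.sin (∑ i, θ i * (z i : ℝ)) with hf
  have hneg : ∀ z, f (-z) = -f z := by
    intro z
    simp only [hf, ← hsymm z]
    rw [show (∑ i, θ i * ((-z) i : ℝ)) = -∑ i, θ i * (z i : ℝ) by
      rw [← Finset.sum_neg_distrib]
      exact Finset.sum_congr rfl fun i _ => by simp [mul_neg]]
    rw [Real.sin_neg, mul_neg]
  have h1 : ∑' z, f z = -∑' z, f z := by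
    conv_lhs => rw [← (Equiv.neg (Fin d → ℤ)).tsum_eq f]
    simp only [Equiv.neg_apply]
    rw [show (fun z => f (-z)) = fun z => -f z from funext hneg]
    exact tsum_neg
  linarith

lemma inner_sum (hsymm : ∀ z, a z = a (-z)) (hsum : Summable fun z => |a z|)
    (hphi : ∀ θ, phi θ = ∑' z : Fin d → ℤ, a z * Real.cos (∑ i, θ i * (z i : ℝ)))
    (θ : Fin d → ℝ) (u : Fin d → ℤ) :
    ∑' z : Fin d → ℤ, a z * Real.cos (∑ i, θ i * ((u - z) i : ℝ))
      = Real.cos (∑ i, θ i * (u i : ℝ)) * phi θ := by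
  have hdot : ∀ z : Fin d → ℤ, (∑ i, θ i * ((u - z) i : ℝ))
      = (∑ i, θ i * (u i : ℝ)) - ∑ i, θ i * (z i : ℝ) := by
    intro z
    rw [← Finset.sum_sub_distrib]
    exact Finset.sum_congr rfl fun i _ => by
      simp [Pi.sub_apply, Int.cast_sub, mul_sub]
  have hterm : ∀ z : Fin d → ℤ, a z * Real.cos (∑ i, θ i * ((u - z) i : ℝ))
      = Real.cos (∑ i, θ i * (u i : ℝ)) * (a z * Real.cos (∑ i, θ i * (z i : ℝ)))
        + Real.sin (∑ i, θ i * (u i : ℝ)) * (a z * Real.sin (∑ i, θ i * (z i : ℝ))) := by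
    intro z
    rw [hdot z, Real.cos_sub]
    ring
  rw [tsum_congr hterm, Summable.tsum_add
    ((summable_cos hsum _ fun z => Real.abs_cos_le_one _).mul_left _)
    ((summable_cos hsum _ fun z => Real.abs_sin_le_one _).mul_left _),
    tsum_mul_left, tsum_mul_left, sin_sum_zero hsymm hsum θ, hphi θ]
  ring

def cosu (u : Fin d → ℤ) : (Fin d → ℝ) → ℝ := fun θ => Real.cos (∑ i, θ i * (u i : ℝ))

lemma cosu_cont (u : Fin d → ℤ) : Continuous (cosu u) := by unfold cosu; fun_prop

lemma cosu_abs_le (u : Fin d → ℤ) (θ : Fin d → ℝ) : |cosu u θ| ≤ 1 :=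
  Real.abs_cos_le_one _

lemma volume_box_toReal : (volume (box d)).toReal = (2 * Real.pi) ^ d := by
  rw [box, Real.volume_Icc_pi_toReal (fun i => by linarith [Real.pi_pos])]
  simp [Finset.prod_const]
  ring_nf

variable {I : ℝ → (Fin d → ℤ) → ℝ} {lam : ℝ}

lemma I_formula
    (hI : ∀ (lam : ℝ) (x : Fin d → ℤ), I lam x = ((2 * Real.pi) ^ d)⁻¹ *
      ∫ θ in Set.Icc (fun _ : Fin d => -Real.pi) (fun _ : Fin d => Real.pi),
        Real.cos (∑ i, θ i * (x i : ℝ)) / (lam - phi θ))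
    (lam : ℝ) (u : Fin d → ℤ) :
    I lam u = ((2 * Real.pi) ^ d)⁻¹ *
      ∫ θ in box d, cosu u θ * (lam - phi θ)⁻¹ := by
  rw [hI]
  refine congrArg _ ?_
  exact setIntegral_congr_fun measurableSet_box fun θ _ => div_eq_mul_inv _ _

lemma denom_pos (hlam : 0 < lam) (hple : ∀ θ : Fin d → ℝ, phi θ ≤ 0)
    (θ : Fin d → ℝ) : 0 < lam - phi θ := by linarith [hple θ]

lemma inv_denom_le (hlam : 0 < lam) (hple : ∀ θ : Fin d → ℝ, phi θ ≤ 0)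
    (θ : Fin d → ℝ) : (lam - phi θ)⁻¹ ≤ lam⁻¹ := by
  have h1 : lam ≤ lam - phi θ := by linarith [hple θ]
  exact inv_anti₀ hlam h1

lemma h_cont (hlam : 0 < lam) (hple : ∀ θ : Fin d → ℝ, phi θ ≤ 0)
    (hphic : Continuous phi) :
    Continuous fun θ : Fin d → ℝ => (lam - phi θ)⁻¹ := by
  refine Continuous.inv₀ (by fun_prop) fun θ => (denom_pos hlam hple θ).ne'

lemma I_even
    (hI : ∀ (lam : ℝ) (x : Fin d → ℤ), I lam x = ((2 * Real.pi) ^ d)⁻¹ *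
      ∫ θ in Set.Icc (fun _ : Fin d => -Real.pi) (fun _ : Fin d => Real.pi),
        Real.cos (∑ i, θ i * (x i : ℝ)) / (lam - phi θ))
    (u : Fin d → ℤ) : I lam (-u) = I lam u := by
  rw [hI, hI]
  congr 1
  refine setIntegral_congr_fun measurableSet_Icc fun θ _ => ?_
  congr 1
  rw [show (∑ i, θ i * ((-u) i : ℝ)) = -∑ i, θ i * (u i : ℝ) by
    rw [← Finset.sum_neg_distrib]
    exact Finset.sum_congr rfl fun i _ => by simp [mul_neg]]
  exact Real.cos_neg _

lemma norm_integrand_le (hlam : 0 < lam) (hple : ∀ θ : Fin d → ℝ, phi θ ≤ 0)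
    (u : Fin d → ℤ) (θ : Fin d → ℝ) :
    ‖cosu u θ * (lam - phi θ)⁻¹‖ ≤ lam⁻¹ := by
  rw [Real.norm_eq_abs, abs_mul]
  have h1 : |(lam - phi θ)⁻¹| = (lam - phi θ)⁻¹ :=
    abs_of_pos (inv_pos.2 (denom_pos hlam hple θ))
  calc |cosu u θ| * |(lam - phi θ)⁻¹| ≤ 1 * |(lam - phi θ)⁻¹| :=
        mul_le_mul_of_nonneg_right (cosu_abs_le u θ) (abs_nonneg _)
  _ = (lam - phi θ)⁻¹ := by rw [one_mul, h1]
  _ ≤ lam⁻¹ := inv_denom_le hlam hple θ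

lemma abs_W_le (hlam : 0 < lam) (hple : ∀ θ : Fin d → ℝ, phi θ ≤ 0)
    (hphic : Continuous phi) (u : Fin d → ℤ) :
    |∫ θ in box d, cosu u θ * (lam - phi θ)⁻¹| ≤ lam⁻¹ * (2 * Real.pi) ^ d := by
  have hint : IntegrableOn (fun θ => cosu u θ * (lam - phi θ)⁻¹) (box d) :=
    integrable_box ((cosu_cont u).mul (h_cont hlam hple hphic))
  calc |∫ θ in box d, cosu u θ * (lam - phi θ)⁻¹|
      ≤ ∫ θ in box d, ‖cosu u θ * (lam - phi θ)⁻¹‖ := by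
        rw [← Real.norm_eq_abs]
        exact norm_integral_le_integral_norm _
  _ ≤ ∫ _θ in box d, lam⁻¹ ∂volume := by
        refine setIntegral_mono_on hint.norm
          (integrableOn_const isCompact_Icc.measure_lt_top.ne)
          measurableSet_box fun θ _ => norm_integrand_le hlam hple u θ
  _ = lam⁻¹ * (2 * Real.pi) ^ d := by
        rw [setIntegral_const, smul_eq_mul, measureReal_def, volume_box_toReal, mul_comm]

lemma I_abs_le (hlam : 0 < lam) (hple : ∀ θ : Fin d → ℝ, phi θ ≤ 0)
    (hphic : Continuous phi)
    (hI : ∀ (lam : ℝ) (x : Fin d → ℤ), I lam x = ((2 * Real.pi) ^ d)⁻¹ *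
      ∫ θ in Set.Icc (fun _ : Fin d => -Real.pi) (fun _ : Fin d => Real.pi),
        Real.cos (∑ i, θ i * (x i : ℝ)) / (lam - phi θ))
    (u : Fin d → ℤ) : |I lam u| ≤ lam⁻¹ := by
  have hC : (0:ℝ) < (2 * Real.pi) ^ d := pow_pos Real.two_pi_pos d
  rw [I_formula hI lam u, abs_mul, abs_of_pos (inv_pos.2 hC)]
  calc ((2 * Real.pi) ^ d)⁻¹ * |∫ θ in box d, cosu u θ * (lam - phi θ)⁻¹|
      ≤ ((2 * Real.pi) ^ d)⁻¹ * (lam⁻¹ * (2 * Real.pi) ^ d) :=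
        mul_le_mul_of_nonneg_left (abs_W_le hlam hple hphic u) (inv_nonneg.2 hC.le)
  _ = lam⁻¹ := by field_simp

lemma resolvent_eq
    (hsymm : ∀ z, a z = a (-z)) (hsum : Summable fun z => |a z|)
    (hphi : ∀ θ, phi θ = ∑' z : Fin d → ℤ, a z * Real.cos (∑ i, θ i * (z i : ℝ)))
    (hlam : 0 < lam) (hple : ∀ θ : Fin d → ℝ, phi θ ≤ 0) (hphic : Continuous phi)
    (hI : ∀ (lam : ℝ) (x : Fin d → ℤ), I lam x = ((2 * Real.pi) ^ d)⁻¹ *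
      ∫ θ in Set.Icc (fun _ : Fin d => -Real.pi) (fun _ : Fin d => Real.pi),
        Real.cos (∑ i, θ i * (x i : ℝ)) / (lam - phi θ))
    (u : Fin d → ℤ) :
    lam * I lam u - ∑' z : Fin d → ℤ, a z * I lam (u - z)
      = if u = 0 then 1 else 0 := by
  have hC : (0:ℝ) < (2 * Real.pi) ^ d := pow_pos Real.two_pi_pos d
  have hcont_h : Continuous fun θ : Fin d → ℝ => (lam - phi θ)⁻¹ :=
    h_cont hlam hple hphic
  have hstep1 : ∀ z : Fin d → ℤ, a z * I lam (u - z)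
      = ((2 * Real.pi) ^ d)⁻¹ *
        ∫ θ in box d, a z * (cosu (u - z) θ * (lam - phi θ)⁻¹) := by
    intro z
    rw [I_formula hI lam (u - z), integral_const_mul _ _]
    ring
  have hswap : ∑' z : Fin d → ℤ,
        ∫ θ in box d, a z * (cosu (u - z) θ * (lam - phi θ)⁻¹)
      = ∫ θ in box d,
          ∑' z : Fin d → ℤ, a z * (cosu (u - z) θ * (lam - phi θ)⁻¹) := by
    refine integral_tsum_of_summable_integral_norm
      (fun z => integrable_box (continuous_const.mul ((cosu_cont (u - z)).mul hcont_h))) ?_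
    refine Summable.of_nonneg_of_le
      (fun z => integral_nonneg fun θ => norm_nonneg _) (fun z => ?_)
      (hsum.mul_right (lam⁻¹ * (2 * Real.pi) ^ d))
    calc ∫ θ in box d, ‖a z * (cosu (u - z) θ * (lam - phi θ)⁻¹)‖
        ≤ ∫ _θ in box d, |a z| * lam⁻¹ ∂volume := by
          refine setIntegral_mono_on
            (integrable_box (continuous_const.mul ((cosu_cont (u - z)).mul hcont_h))).norm
            (integrableOn_const isCompact_Icc.measure_lt_top.ne)
            measurableSet_box fun θ _ => ?_
          rw [norm_mul, Real.norm_eq_abs (a z)]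
          exact mul_le_mul_of_nonneg_left (norm_integrand_le hlam hple _ θ) (abs_nonneg _)
      _ = |a z| * (lam⁻¹ * (2 * Real.pi) ^ d) := by
          rw [setIntegral_const, smul_eq_mul, measureReal_def, volume_box_toReal]; ring
  have hinner : ∀ θ : Fin d → ℝ,
      ∑' z : Fin d → ℤ, a z * (cosu (u - z) θ * (lam - phi θ)⁻¹)
        = (cosu u θ * phi θ) * (lam - phi θ)⁻¹ := by
    intro θ
    simp only [cosu]
    have hre : ∀ z : Fin d → ℤ,
        a z * (Real.cos (∑ i, θ i * ((u - z) i : ℝ)) * (lam - phi θ)⁻¹)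
          = (a z * Real.cos (∑ i, θ i * ((u - z) i : ℝ))) * (lam - phi θ)⁻¹ :=
      fun z => by ring
    rw [tsum_congr hre, tsum_mul_right, inner_sum hsymm hsum hphi θ u]
  rw [tsum_congr hstep1, tsum_mul_left, hswap,
    setIntegral_congr_fun measurableSet_box fun θ _ => hinner θ,
    I_formula hI lam u]
  have h1 : lam * (((2 * Real.pi) ^ d)⁻¹ * ∫ θ in box d, cosu u θ * (lam - phi θ)⁻¹)
      = ((2 * Real.pi) ^ d)⁻¹ *
        ∫ θ in box d, lam * (cosu u θ * (lam - phi θ)⁻¹) := by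
    rw [integral_const_mul]; ring
  rw [h1, ← mul_sub, ← integral_sub (f := fun θ => lam * (cosu u θ * (lam - phi θ)⁻¹))
    (g := fun θ => cosu u θ * phi θ * (lam - phi θ)⁻¹)
    (integrable_box (continuous_const.mul ((cosu_cont u).mul hcont_h)))
    (integrable_box (((cosu_cont u).mul (by fun_prop : Continuous phi)).mul hcont_h))]
  have h2 : ∀ θ ∈ box d,
      lam * (cosu u θ * (lam - phi θ)⁻¹) - (cosu u θ * phi θ) * (lam - phi θ)⁻¹
        = cosu u θ := by
    intro θ _
    have hd : (lam - phi θ) * (lam - phi θ)⁻¹ = 1 :=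
      mul_inv_cancel₀ (denom_pos hlam hple θ).ne'
    linear_combination (cosu u θ) * hd
  rw [setIntegral_congr_fun measurableSet_box h2]
  have h3 : (∫ θ in box d, cosu u θ) = if u = 0 then (2 * Real.pi) ^ d else 0 := by
    simp only [cosu]
    exact integral_cos_box u
  rw [h3]
  by_cases hu : u = 0
  · rw [if_pos hu, if_pos hu, inv_mul_cancel₀ hC.ne']
  · rw [if_neg hu, if_neg hu, mul_zero]

lemma dot_sub (θ : Fin d → ℝ) (u v : Fin d → ℤ) :
    (∑ i, θ i * ((u - v) i : ℝ)) = (∑ i, θ i * (u i : ℝ)) - ∑ i, θ i * (v i : ℝ) := by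
  rw [← Finset.sum_sub_distrib]
  exact Finset.sum_congr rfl fun i _ => by simp [Pi.sub_apply, mul_sub]

lemma dot_add (θ : Fin d → ℝ) (u v : Fin d → ℤ) :
    (∑ i, θ i * ((u + v) i : ℝ)) = (∑ i, θ i * (u i : ℝ)) + ∑ i, θ i * (v i : ℝ) := by
  rw [← Finset.sum_add_distrib]
  exact Finset.sum_congr rfl fun i _ => by simp [Pi.add_apply, mul_add]

section Bessel

variable (hlam : 0 < lam) (hple : ∀ θ : Fin d → ℝ, phi θ ≤ 0) (hphic : Continuous phi)
  (hI : ∀ (lam : ℝ) (x : Fin d → ℤ), I lam x = ((2 * Real.pi) ^ d)⁻¹ *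
      ∫ θ in Set.Icc (fun _ : Fin d => -Real.pi) (fun _ : Fin d => Real.pi),
        Real.cos (∑ i, θ i * (x i : ℝ)) / (lam - phi θ))

include hlam hple hphic hI

lemma bessel_finset (F : Finset (Fin d → ℤ)) (hFsym : ∀ u ∈ F, -u ∈ F) :
    ∑ u ∈ F, (I lam u) ^ 2 ≤ lam⁻¹ ^ 2 := by
  have hC : (0:ℝ) < (2 * Real.pi) ^ d := pow_pos Real.two_pi_pos d
  have hcont_h : Continuous fun θ : Fin d → ℝ => (lam - phi θ)⁻¹ :=
    h_cont hlam hple hphic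
  set C : ℝ := (2 * Real.pi) ^ d with hCdef
  set h : (Fin d → ℝ) → ℝ := fun θ => (lam - phi θ)⁻¹ with hh
  set s : (Fin d → ℝ) → ℝ := fun θ => ∑ u ∈ F, I lam u * cosu u θ with hs
  have hscont : Continuous s := by
    rw [hs]
    exact continuous_finset_sum _ fun u _ => continuous_const.mul (cosu_cont u)
  have hW : ∀ u : Fin d → ℤ, (∫ θ in box d, cosu u θ * h θ) = C * I lam u := by
    intro u
    rw [I_formula hI lam u, hh]
    field_simp
    rw [hCdef]
  -- A1
  have hA1 : (∫ θ in box d, h θ * s θ) = C * ∑ u ∈ F, (I lam u) ^ 2 := by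
    have hpt : ∀ θ, h θ * s θ = ∑ u ∈ F, I lam u * (cosu u θ * h θ) := by
      intro θ
      rw [hs, Finset.mul_sum]
      exact Finset.sum_congr rfl fun u _ => by ring
    rw [setIntegral_congr_fun measurableSet_box fun θ _ => hpt θ,
      integral_finset_sum (f := fun u θ => I lam u * (cosu u θ * h θ)) F fun u _ =>
        integrable_box (continuous_const.mul ((cosu_cont u).mul hcont_h))]
    rw [Finset.sum_congr rfl fun (u : Fin d → ℤ) (_ : u ∈ F) =>
      (by rw [integral_const_mul, hW u] :
        (∫ θ in box d, I lam u * (cosu u θ * h θ)) = I lam u * (C * I lam u)),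
      Finset.mul_sum]
    exact Finset.sum_congr rfl fun u _ => by ring
  -- cos cos integral
  have hcoscos : ∀ u u' : Fin d → ℤ, (∫ θ in box d, cosu u θ * cosu u' θ)
      = ((if u - u' = 0 then C else 0) + (if u + u' = 0 then C else 0)) / 2 := by
    intro u u'
    have hpt : ∀ θ, cosu u θ * cosu u' θ = (cosu (u - u') θ + cosu (u + u') θ) / 2 := by
      intro θ
      simp only [cosu]
      rw [dot_sub, dot_add, Real.cos_sub, Real.cos_add]
      ring
    rw [setIntegral_congr_fun measurableSet_box fun θ _ => hpt θ]
    have hint1 : IntegrableOn (cosu (u - u') : (Fin d → ℝ) → ℝ) (box d) :=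
      integrable_box (cosu_cont _)
    have hint2 : IntegrableOn (cosu (u + u') : (Fin d → ℝ) → ℝ) (box d) :=
      integrable_box (cosu_cont _)
    rw [integral_div, integral_add hint1 hint2]
    have e1 : (∫ θ in box d, cosu (u - u') θ) = if u - u' = 0 then C else 0 :=
      integral_cos_box (u - u')
    have e2 : (∫ θ in box d, cosu (u + u') θ) = if u + u' = 0 then C else 0 :=
      integral_cos_box (u + u')
    rw [e1, e2]
  -- A2
  have hA2 : (∫ θ in box d, s θ * s θ) = C * ∑ u ∈ F, (I lam u) ^ 2 := by
    have hpt : ∀ θ, s θ * s θ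
        = ∑ u ∈ F, ∑ u' ∈ F, (I lam u * I lam u') * (cosu u θ * cosu u' θ) := by
      intro θ
      rw [hs, Finset.sum_mul_sum]
      exact Finset.sum_congr rfl fun u _ =>
        Finset.sum_congr rfl fun u' _ => by ring
    rw [setIntegral_congr_fun measurableSet_box fun θ _ => hpt θ,
      integral_finset_sum F fun u _ => ?_]
    swap
    · exact (integrable_box (continuous_finset_sum _ fun u' _ =>
        continuous_const.mul ((cosu_cont u).mul (cosu_cont u'))))
    have hinner : ∀ u ∈ F,
        (∫ θ in box d, ∑ u' ∈ F, (I lam u * I lam u') * (cosu u θ * cosu u' θ))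
          = C * (I lam u) ^ 2 := by
      intro u hu
      rw [integral_finset_sum (f := fun u' θ => (I lam u * I lam u') * (cosu u θ * cosu u' θ))
        F fun u' _ =>
        integrable_box (continuous_const.mul ((cosu_cont u).mul (cosu_cont u')))]
      have hterm : ∀ u' ∈ F,
          (∫ θ in box d, (I lam u * I lam u') * (cosu u θ * cosu u' θ))
            = (if u' = u then I lam u * I lam u' * C / 2 else 0)
              + (if u' = -u then I lam u * I lam u' * C / 2 else 0) := by
        intro u' _
        rw [integral_const_mul, hcoscos u u']
        have hc1 : (u - u' = 0) = (u' = u) := by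
          simp [sub_eq_zero, eq_comm]
        have hc2 : (u + u' = 0) = (u' = -u) := by
          apply propext
          constructor
          · intro hx
            exact eq_neg_of_add_eq_zero_right hx
          · intro hx
            rw [hx]
            abel
        simp only [hc1, hc2]
        by_cases h1 : u' = u <;> by_cases h2 : u' = -u <;>
          simp [h1, h2] <;> split_ifs <;> ring
      rw [Finset.sum_congr rfl hterm, Finset.sum_add_distrib,
        Finset.sum_ite_eq' F u (fun u' => I lam u * I lam u' * C / 2),
        Finset.sum_ite_eq' F (-u) (fun u' => I lam u * I lam u' * C / 2),
        if_pos hu, if_pos (hFsym u hu), I_even hI u]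
      ring
    rw [Finset.sum_congr rfl hinner, Finset.mul_sum]
  -- A3
  have hposint : 0 ≤ ∫ θ in box d, (h θ - s θ) ^ 2 :=
    setIntegral_nonneg measurableSet_box fun θ _ => sq_nonneg _
  have hexp : (∫ θ in box d, (h θ - s θ) ^ 2)
      = (∫ θ in box d, h θ * h θ) - 2 * (∫ θ in box d, h θ * s θ)
        + ∫ θ in box d, s θ * s θ := by
    have hpt : ∀ θ, (h θ - s θ) ^ 2
        = (h θ * h θ - 2 * (h θ * s θ)) + s θ * s θ := fun θ => by ring
    have i1 : IntegrableOn (fun θ => h θ * h θ) (box d) :=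
      integrable_box (hcont_h.mul hcont_h)
    have i2 : IntegrableOn (fun θ => 2 * (h θ * s θ)) (box d) :=
      integrable_box (continuous_const.mul (hcont_h.mul hscont))
    have i3 : IntegrableOn (fun θ => s θ * s θ) (box d) :=
      integrable_box (hscont.mul hscont)
    rw [setIntegral_congr_fun measurableSet_box fun θ _ => hpt θ,
      integral_add (f := fun θ => h θ * h θ - 2 * (h θ * s θ))
        (g := fun θ => s θ * s θ) (i1.sub i2) i3,
      integral_sub (f := fun θ => h θ * h θ)
        (g := fun θ => 2 * (h θ * s θ)) i1 i2,
      integral_const_mul]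
  have hh2 : (∫ θ in box d, h θ * h θ) ≤ lam⁻¹ ^ 2 * C := by
    calc (∫ θ in box d, h θ * h θ) ≤ ∫ _θ in box d, lam⁻¹ ^ 2 ∂volume := by
          refine setIntegral_mono_on (integrable_box (hcont_h.mul hcont_h))
            (integrableOn_const isCompact_Icc.measure_lt_top.ne)
            measurableSet_box fun θ _ => ?_
          have h1 : 0 < h θ := inv_pos.2 (denom_pos hlam hple θ)
          have h2 : h θ ≤ lam⁻¹ := inv_denom_le hlam hple θ
          calc h θ * h θ ≤ lam⁻¹ * lam⁻¹ :=
                mul_le_mul h2 h2 h1.le (inv_pos.2 hlam).le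
          _ = lam⁻¹ ^ 2 := by ring
      _ = lam⁻¹ ^ 2 * C := by
          rw [setIntegral_const, smul_eq_mul, measureReal_def, volume_box_toReal, mul_comm, hCdef]
  have hfinal : C * ∑ u ∈ F, (I lam u) ^ 2 ≤ lam⁻¹ ^ 2 * C := by
    have := hposint
    rw [hexp, hA1, hA2] at this
    linarith
  rw [mul_comm] at hfinal
  exact le_of_mul_le_mul_right hfinal hC

lemma summable_I_sq : Summable fun u : Fin d → ℤ => (I lam u) ^ 2 := by
  refine summable_of_sum_le (c := lam⁻¹ ^ 2) (fun u => sq_nonneg _) fun G => ?_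
  set F : Finset (Fin d → ℤ) := G ∪ G.image (fun u => -u) with hF
  have hFsym : ∀ u ∈ F, -u ∈ F := by
    intro u hu
    rcases Finset.mem_union.1 hu with hg | hg
    · exact Finset.mem_union_right _ (Finset.mem_image_of_mem _ hg)
    · obtain ⟨v, hv, rfl⟩ := Finset.mem_image.1 hg
      rw [neg_neg]
      exact Finset.mem_union_left _ hv
  calc ∑ u ∈ G, (I lam u) ^ 2 ≤ ∑ u ∈ F, (I lam u) ^ 2 :=
        Finset.sum_le_sum_of_subset_of_nonneg Finset.subset_union_left
          fun _ _ _ => sq_nonneg _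
  _ ≤ lam⁻¹ ^ 2 := bessel_finset hlam hple hphic hI F hFsym

end Bessel

lemma max_principle
    (hnonneg : ∀ z, z ≠ 0 → 0 ≤ a z) (hneg : a 0 < 0)
    (hsum : Summable fun z => |a z|) (htot : ∑' z, a z = 0)
    (hlam : 0 < lam) (u : (Fin d → ℤ) → ℝ) (M₀ : ℝ) (hb : ∀ x, |u x| ≤ M₀)
    (heq : ∀ x, lam * u x = ∑' x' : Fin d → ℤ, a (x - x') * u x') :
    ∀ x, u x = 0 := by
  have hsa : Summable a := summable_abs_iff.mp hsum
  have hne : Nonempty (Fin d → ℤ) := ⟨0⟩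
  have hbdd : BddAbove (Set.range fun x => |u x|) :=
    ⟨M₀, by rintro y ⟨x, rfl⟩; exact hb x⟩
  set M : ℝ := ⨆ x, |u x| with hM
  have hM_le : ∀ x, |u x| ≤ M := fun x => le_ciSup hbdd x
  have hM0 : 0 ≤ M := le_trans (abs_nonneg _) (hM_le 0)
  -- the tail sum of a
  have htail : ∑' z : Fin d → ℤ, (if z = 0 then 0 else a z) = -a 0 := by
    have h1 := Summable.tsum_eq_add_tsum_ite hsa 0
    rw [htot] at h1
    linarith
  -- main pointwise estimate
  have hkey : ∀ x, (lam - a 0) * |u x| ≤ (-a 0) * M := by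
    intro x
    have hre : ∑' x' : Fin d → ℤ, a (x - x') * u x'
        = ∑' z : Fin d → ℤ, a z * u (x - z) := by
      have := (Equiv.subLeft x).tsum_eq (fun x' => a (x - x') * u x')
      rw [← this]
      refine tsum_congr fun z => ?_
      simp [Equiv.subLeft, _root_.sub_sub_cancel]
    have hsg : Summable fun z : Fin d → ℤ => a z * u (x - z) := by
      refine Summable.of_norm_bounded (hsum.mul_right M₀) fun z => ?_
      rw [Real.norm_eq_abs, abs_mul]
      exact mul_le_mul_of_nonneg_left (hb _) (abs_nonneg _)
    have hsplit := Summable.tsum_eq_add_tsum_ite hsg 0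
    have hx0 : (x - 0 : Fin d → ℤ) = x := by simp
    rw [hx0] at hsplit
    have heqz : lam * u x = a 0 * u x
        + ∑' z : Fin d → ℤ, if z = 0 then 0 else a z * u (x - z) := by
      rw [heq x, hre]
      exact hsplit
    have habs : |lam * u x - a 0 * u x|
        ≤ ∑' z : Fin d → ℤ, (if z = 0 then 0 else a z) * M := by
      have e1 : lam * u x - a 0 * u x
          = ∑' z : Fin d → ℤ, if z = 0 then 0 else a z * u (x - z) := by
        rw [heqz]; ring
      rw [e1]
      have hsum2 : Summable fun z : Fin d → ℤ =>
          (if z = 0 then 0 else a z * u (x - z)) := by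
        refine Summable.of_norm_bounded (hsum.mul_right M₀) fun z => ?_
        rcases eq_or_ne z 0 with rfl | hz
        · simp [abs_nonneg, mul_nonneg (abs_nonneg _) (le_trans (abs_nonneg _) (hb x))]
        · rw [if_neg hz, Real.norm_eq_abs, abs_mul]
          exact mul_le_mul_of_nonneg_left (hb _) (abs_nonneg _)
      calc |∑' z : Fin d → ℤ, if z = 0 then 0 else a z * u (x - z)|
          ≤ ∑' z : Fin d → ℤ, |if z = 0 then 0 else a z * u (x - z)| := by
            rw [← Real.norm_eq_abs]
            exact norm_tsum_le_tsum_norm hsum2.norm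
        _ ≤ ∑' z : Fin d → ℤ, (if z = 0 then 0 else a z) * M := by
            refine Summable.tsum_le_tsum (fun z => ?_) hsum2.abs ?_
            · rcases eq_or_ne z 0 with rfl | hz
              · simp
              · rw [if_neg hz, if_neg hz, abs_mul, abs_of_nonneg (hnonneg z hz)]
                exact mul_le_mul_of_nonneg_left (hM_le _) (hnonneg z hz)
            · refine Summable.of_norm_bounded (hsum.mul_right M) fun z => ?_
              rcases eq_or_ne z 0 with rfl | hz
              · simp [mul_nonneg (abs_nonneg (a 0)) hM0]
              · rw [if_neg hz, Real.norm_eq_abs, abs_mul, abs_of_nonneg hM0]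
    have htailM : ∑' z : Fin d → ℤ, (if z = 0 then 0 else a z) * M = (-a 0) * M := by
      rw [tsum_mul_right, htail]
    rw [htailM] at habs
    calc (lam - a 0) * |u x| = |(lam - a 0) * u x| := by
          rw [abs_mul, abs_of_pos (by linarith : (0:ℝ) < lam - a 0)]
    _ = |lam * u x - a 0 * u x| := by ring_nf
    _ ≤ (-a 0) * M := habs
  -- conclude
  have hlampos : (0:ℝ) < lam - a 0 := by linarith
  have hMle : M ≤ ((-a 0) * M) / (lam - a 0) := by
    refine ciSup_le fun x => ?_
    rw [le_div_iff₀ hlampos]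
    calc |u x| * (lam - a 0) = (lam - a 0) * |u x| := by ring
    _ ≤ (-a 0) * M := hkey x
  have hM_final : lam * M ≤ 0 := by
    rw [le_div_iff₀ hlampos] at hMle
    nlinarith
  have : M ≤ 0 := by
    by_contra hMpos
    push_neg at hMpos
    nlinarith
  intro x
  have := le_antisymm this hM0
  have h2 := hM_le x
  rw [this] at h2
  exact abs_eq_zero.1 (le_antisymm h2 (abs_nonneg _))

lemma summable_shift (hsum : Summable fun z => |a z|) (x : Fin d → ℤ)
    (c : (Fin d → ℤ) → ℝ) (B : ℝ) (hc : ∀ z, |c z| ≤ B) :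
    Summable fun x' : Fin d → ℤ => a (x - x') * c x' := by
  have h1 : Summable fun x' : Fin d → ℤ => |a (x - x')| :=
    ((Equiv.subLeft x).summable_iff (f := fun z => |a z|)).2 hsum
  refine Summable.of_norm_bounded (h1.mul_right B) fun x' => ?_
  rw [Real.norm_eq_abs, abs_mul]
  exact mul_le_mul_of_nonneg_left (hc x') (abs_nonneg _)

lemma resolvent_eq'
    (hsymm : ∀ z, a z = a (-z)) (hsum : Summable fun z => |a z|)
    (hphi : ∀ θ, phi θ = ∑' z : Fin d → ℤ, a z * Real.cos (∑ i, θ i * (z i : ℝ)))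
    (hlam : 0 < lam) (hple : ∀ θ : Fin d → ℝ, phi θ ≤ 0) (hphic : Continuous phi)
    (hI : ∀ (lam : ℝ) (x : Fin d → ℤ), I lam x = ((2 * Real.pi) ^ d)⁻¹ *
      ∫ θ in Set.Icc (fun _ : Fin d => -Real.pi) (fun _ : Fin d => Real.pi),
        Real.cos (∑ i, θ i * (x i : ℝ)) / (lam - phi θ))
    (x y : Fin d → ℤ) :
    ∑' x' : Fin d → ℤ, a (x - x') * I lam (x' - y)
      = lam * I lam (x - y) - (if x = y then 1 else 0) := by
  have h1 : ∑' x' : Fin d → ℤ, a (x - x') * I lam (x' - y)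
      = ∑' z : Fin d → ℤ, a z * I lam ((x - y) - z) := by
    rw [← (Equiv.subLeft x).tsum_eq (fun x' => a (x - x') * I lam (x' - y))]
    refine tsum_congr fun z => ?_
    have e1 : Equiv.subLeft x z = x - z := rfl
    have e2 : x - (x - z) = z := by abel
    have e3 : x - z - y = x - y - z := by abel
    rw [e1, e2, e3]
  have h2 := resolvent_eq hsymm hsum hphi hlam hple hphic hI (x - y)
  have h3 : (if x - y = 0 then (1:ℝ) else 0) = if x = y then 1 else 0 := by
    simp [sub_eq_zero]
  rw [h1]
  rw [h3] at h2
  linarith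

lemma lp_sum_apply {ι : Type*} (s : Finset ι)
    (f : ι → lp (fun _ : Fin d → ℤ => ℝ) 2) (x : Fin d → ℤ) :
    (↑(∑ j ∈ s, f j) : (Fin d → ℤ) → ℝ) x = ∑ j ∈ s, f j x := by
  classical
  induction s using Finset.cons_induction with
  | empty => simp
  | cons j s hj ih =>
    rw [Finset.sum_cons, Finset.sum_cons, ← ih]
    have := lp.coeFn_add (f j) (∑ k ∈ s, f k)
    rw [this]
    rfl

end

end EigenAux

/-- `λ > 0` is an eigenvalue of `H` iff the linear system
`v_i = ∑_j β_j v_j I_{x_j - x_i}(λ)` has a non-trivial solution. -/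
theorem eigenvalue_iff_system (d : ℕ) (hd : 1 ≤ d) (a : (Fin d → ℤ) → ℝ)
    (hsymm : ∀ z, a z = a (-z))
    (hnonneg : ∀ z, z ≠ 0 → 0 ≤ a z)
    (hneg : a 0 < 0)
    (hsum : Summable fun z => |a z|)
    (htot : ∑' z, a z = 0)
    (hirr : ∀ z : Fin d → ℤ, ∃ (k : ℕ) (zs : Fin k → Fin d → ℤ),
      z = ∑ i, zs i ∧ ∀ i, a (zs i) ≠ 0)
    (A : lp (fun _ : Fin d → ℤ => ℝ) 2 →L[ℝ] lp (fun _ : Fin d → ℤ => ℝ) 2)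
    (hA : ∀ (u : lp (fun _ : Fin d → ℤ => ℝ) 2) (x : Fin d → ℤ),
      A u x = ∑' x' : Fin d → ℤ, a (x - x') * u x')
    (N : ℕ) (hN : 1 ≤ N) (X : Fin N → Fin d → ℤ) (hX : Function.Injective X)
    (β : Fin N → ℝ) (hβ : ∀ j, 0 < β j)
    (H : lp (fun _ : Fin d → ℤ => ℝ) 2 →L[ℝ] lp (fun _ : Fin d → ℤ => ℝ) 2)
    (hH : ∀ (u : lp (fun _ : Fin d → ℤ => ℝ) 2) (x : Fin d → ℤ),
      H u x = A u x + ∑ j : Fin N, if x = X j then β j * u x else 0)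
    (phi : (Fin d → ℝ) → ℝ)
    (hphi : ∀ θ, phi θ = ∑' z : Fin d → ℤ, a z * Real.cos (∑ i, θ i * (z i : ℝ)))
    (I : ℝ → (Fin d → ℤ) → ℝ)
    (hI : ∀ (lam : ℝ) (x : Fin d → ℤ), I lam x = ((2 * Real.pi) ^ d)⁻¹ *
      ∫ θ in Set.Icc (fun _ : Fin d => -Real.pi) (fun _ : Fin d => Real.pi),
        Real.cos (∑ i, θ i * (x i : ℝ)) / (lam - phi θ))
    (lam : ℝ) (hlam : 0 < lam) :
    (∃ f : lp (fun _ : Fin d → ℤ => ℝ) 2, f ≠ 0 ∧ H f = lam • f) ↔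
      (∃ v : Fin N → ℝ, v ≠ 0 ∧ ∀ i, v i = ∑ j, β j * v j * I lam (X j - X i)) := by
  classical
  have hphic : Continuous phi := EigenAux.phi_cont hsum hphi
  have hple : ∀ θ, phi θ ≤ 0 := EigenAux.phi_le hnonneg hsum htot hphi
  have hIsq : Summable fun u : Fin d → ℤ => (I lam u) ^ 2 :=
    EigenAux.summable_I_sq hlam hple hphic hI
  have hIb : ∀ u, |I lam u| ≤ lam⁻¹ := fun u =>
    EigenAux.I_abs_le hlam hple hphic hI u
  have hIeven : ∀ u, I lam (-u) = I lam u := fun u => EigenAux.I_even hI u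
  have hres : ∀ x y : Fin d → ℤ, ∑' x' : Fin d → ℤ, a (x - x') * I lam (x' - y)
      = lam * I lam (x - y) - (if x = y then 1 else 0) := fun x y =>
    EigenAux.resolvent_eq' hsymm hsum hphi hlam hple hphic hI x y
  -- the resolvent kernels as lp elements
  have hmem : ∀ y : Fin d → ℤ, Memℓp (fun x : Fin d → ℤ => I lam (x - y)) 2 := by
    intro y
    apply memℓp_gen
    have h1 : Summable fun x : Fin d → ℤ => (I lam (x - y)) ^ 2 :=
      ((Equiv.subRight y).summable_iff (f := fun u => (I lam u) ^ 2)).2 hIsq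
    have h2 : (fun x : Fin d → ℤ => ‖I lam (x - y)‖ ^ (2 : ℝ≥0∞).toReal)
        = fun x : Fin d → ℤ => (I lam (x - y)) ^ 2 := by
      funext x
      rw [ENNReal.toReal_ofNat, Real.norm_eq_abs,
        show ((2:ℝ)) = ((2:ℕ):ℝ) by norm_num, Real.rpow_natCast, sq_abs]
    rw [h2]
    exact h1
  set g : (Fin d → ℤ) → lp (fun _ : Fin d → ℤ => ℝ) 2 :=
    fun y => ⟨fun x => I lam (x - y), hmem y⟩ with hg
  have hg_apply : ∀ y x, (g y : (Fin d → ℤ) → ℝ) x = I lam (x - y) := fun y x => rfl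
  -- F v : the candidate eigenfunction
  set F : (Fin N → ℝ) → lp (fun _ : Fin d → ℤ => ℝ) 2 :=
    fun v => ∑ j : Fin N, (β j * v j) • g (X j) with hF
  have hF_apply : ∀ v x, (F v : (Fin d → ℤ) → ℝ) x
      = ∑ j : Fin N, β j * v j * I lam (x - X j) := by
    intro v x
    rw [hF]
    rw [EigenAux.lp_sum_apply Finset.univ (fun j => (β j * v j) • g (X j)) x]
    refine Finset.sum_congr rfl fun j _ => ?_
    rw [lp.coeFn_smul, Pi.smul_apply, smul_eq_mul, hg_apply]
  have hFb : ∀ v x, |(F v : (Fin d → ℤ) → ℝ) x| ≤ ∑ j : Fin N, |β j * v j| * lam⁻¹ := by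
    intro v x
    rw [hF_apply]
    calc |∑ j : Fin N, β j * v j * I lam (x - X j)|
        ≤ ∑ j : Fin N, |β j * v j * I lam (x - X j)| :=
          Finset.abs_sum_le_sum_abs _ _
    _ ≤ ∑ j : Fin N, |β j * v j| * lam⁻¹ := by
        refine Finset.sum_le_sum fun j _ => ?_
        rw [abs_mul]
        exact mul_le_mul_of_nonneg_left (hIb _) (abs_nonneg _)
  -- key computational identity for F v
  have hAF : ∀ (v : Fin N → ℝ) (x : Fin d → ℤ),
      ∑' x' : Fin d → ℤ, a (x - x') * (F v : (Fin d → ℤ) → ℝ) x'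
        = lam * (F v : (Fin d → ℤ) → ℝ) x
          - ∑ j : Fin N, (if x = X j then β j * v j else 0) := by
    intro v x
    have hsummand : ∀ x' : Fin d → ℤ, a (x - x') * (F v : (Fin d → ℤ) → ℝ) x'
        = ∑ j : Fin N, (β j * v j) * (a (x - x') * I lam (x' - X j)) := by
      intro x'
      rw [hF_apply, Finset.mul_sum]
      exact Finset.sum_congr rfl fun j _ => by ring
    rw [tsum_congr hsummand, Summable.tsum_finsetSum (fun j _ =>
      ((EigenAux.summable_shift hsum x (fun x' => I lam (x' - X j)) lam⁻¹
        (fun z => hIb _)).mul_left _))]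
    have hterm : ∀ j ∈ Finset.univ, ∑' x' : Fin d → ℤ,
        (β j * v j) * (a (x - x') * I lam (x' - X j))
          = (β j * v j) * (lam * I lam (x - X j)) - (if x = X j then β j * v j else 0) := by
      intro j _
      rw [tsum_mul_left, hres x (X j)]
      by_cases hxj : x = X j <;> simp [hxj] <;> ring
    rw [Finset.sum_congr rfl hterm, Finset.sum_sub_distrib, hF_apply, Finset.mul_sum]
    congr 1
    exact Finset.sum_congr rfl fun j _ => by ring
  constructor
  · -- eigenvalue → system
    rintro ⟨f, hf0, hfeig⟩
    set v : Fin N → ℝ := fun i => f (X i) with hv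
    -- coordinatewise eigen equation
    have hcoord : ∀ x, ∑' x' : Fin d → ℤ, a (x - x') * f x'
        + ∑ j : Fin N, (if x = X j then β j * v j else 0) = lam * f x := by
      intro x
      have h1 : (H f : (Fin d → ℤ) → ℝ) x
          = ((lam • f : lp (fun _ : Fin d → ℤ => ℝ) 2) : (Fin d → ℤ) → ℝ) x := by
        rw [hfeig]
      rw [lp.coeFn_smul, Pi.smul_apply, smul_eq_mul] at h1
      rw [hH f x, hA f x] at h1
      rw [← h1]
      congr 1
      refine Finset.sum_congr rfl fun j _ => ?_
      by_cases hxj : x = X j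
      · rw [if_pos hxj, if_pos hxj, hv, hxj]
      · rw [if_neg hxj, if_neg hxj]
    -- difference satisfies the maximum principle
    have hfb : ∀ x, |f x| ≤ ‖f‖ := by
      intro x
      have := lp.norm_apply_le_norm (by norm_num : (2:ℝ≥0∞) ≠ 0) f x
      rwa [Real.norm_eq_abs] at this
    have hzero : ∀ x, f x - (F v : (Fin d → ℤ) → ℝ) x = 0 := by
      refine EigenAux.max_principle hnonneg hneg hsum htot hlam
        (fun x => f x - (F v : (Fin d → ℤ) → ℝ) x)
        (‖f‖ + ∑ j : Fin N, |β j * v j| * lam⁻¹) (fun x => ?_) (fun x => ?_)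
      · calc |f x - (F v : (Fin d → ℤ) → ℝ) x|
            ≤ |f x| + |(F v : (Fin d → ℤ) → ℝ) x| := abs_sub _ _
        _ ≤ ‖f‖ + ∑ j : Fin N, |β j * v j| * lam⁻¹ :=
            add_le_add (hfb x) (hFb v x)
      · have h2 := hAF v x
        have h3 := hcoord x
        have hsub : ∑' x' : Fin d → ℤ,
            a (x - x') * (f x' - (F v : (Fin d → ℤ) → ℝ) x')
            = (∑' x' : Fin d → ℤ, a (x - x') * f x')
              - ∑' x' : Fin d → ℤ, a (x - x') * (F v : (Fin d → ℤ) → ℝ) x' := by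
          rw [← Summable.tsum_sub (EigenAux.summable_shift hsum x _ ‖f‖ hfb)
            (EigenAux.summable_shift hsum x _ _ (hFb v))]
          exact tsum_congr fun x' => by ring
        rw [hsub, h2]
        ring_nf
        linarith [h3]
    -- v is nonzero
    have hvne : v ≠ 0 := by
      intro hv0
      apply hf0
      apply lp.ext
      funext x
      have h1 := hzero x
      have h2 : (F v : (Fin d → ℤ) → ℝ) x = 0 := by
        rw [hF_apply]
        refine Finset.sum_eq_zero fun j _ => by rw [hv0]; simp
      have : f x = 0 := by rw [h2] at h1; linarith
      simpa using this
    refine ⟨v, hvne, fun i => ?_⟩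
    have h1 := hzero (X i)
    have h2 : f (X i) = (F v : (Fin d → ℤ) → ℝ) (X i) := by linarith
    rw [hv]
    show f (X i) = _
    rw [h2, hF_apply]
    refine Finset.sum_congr rfl fun j _ => ?_
    have : I lam (X i - X j) = I lam (X j - X i) := by
      rw [← hIeven (X i - X j), neg_sub]
    rw [this]
  · -- system → eigenvalue
    rintro ⟨v, hvne, hsys⟩
    have hFX : ∀ i, (F v : (Fin d → ℤ) → ℝ) (X i) = v i := by
      intro i
      rw [hF_apply]
      rw [hsys i]
      refine Finset.sum_congr rfl fun j _ => ?_
      have : I lam (X i - X j) = I lam (X j - X i) := by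
        rw [← hIeven (X i - X j), neg_sub]
      rw [this]
    refine ⟨F v, ?_, ?_⟩
    · intro hF0
      obtain ⟨i, hi⟩ := Function.ne_iff.1 hvne
      apply hi
      rw [← hFX i, hF0]
      simp
    · apply lp.ext
      funext x
      rw [lp.coeFn_smul, Pi.smul_apply, smul_eq_mul]
      show (H (F v) : (Fin d → ℤ) → ℝ) x = lam * (F v : (Fin d → ℤ) → ℝ) x
      rw [hH (F v) x, hA (F v) x, hAF v x]
      have hpot : ∑ j : Fin N, (if x = X j then β j * (F v : (Fin d → ℤ) → ℝ) x else 0)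
          = ∑ j : Fin N, (if x = X j then β j * v j else 0) := by
        refine Finset.sum_congr rfl fun j _ => ?_
        by_cases hxj : x = X j
        · rw [if_pos hxj, if_pos hxj, hxj, hFX j]
        · rw [if_neg hxj, if_neg hxj]
      rw [hpot]
      ring
end

section
/- The subspace of ℓ²(ℤ^d) spanned by the union, over all λ > 0, of the eigenspaces ker(H − λ·I) has dimension at most N. Equivalently, any N + 1 eigenvectors of H corresponding to positive eigenvalues are linearly dependent. -/
open MeasureTheory ENNReal


section Aux
variable {d : ℕ}

local notation "E" => lp (fun _ : Fin d → ℤ => ℝ) 2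

lemma sqSummable (u : E) : Summable (fun x : Fin d → ℤ => (u x)^2) := by
  have := (lp.memℓp u).summable (p := 2) (by norm_num)
  simpa [Real.rpow_natCast, sq_abs] using this

lemma sqSummable_shift (u : E) (z : Fin d → ℤ) :
    Summable (fun x : Fin d → ℤ => (u (x - z))^2) :=
  (Equiv.subRight z).summable_iff.mpr (sqSummable u)

lemma absmul_le (u v : E) (z x : Fin d → ℤ) :
    |v x * u (x - z)| ≤ ((v x)^2 + (u (x - z))^2)/2 := by
  rw [abs_mul]
  nlinarith [sq_nonneg (|v x| - |u (x - z)|), sq_abs (v x), sq_abs (u (x - z)),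
    abs_nonneg (v x), abs_nonneg (u (x - z))]

lemma mulSummable (u v : E) (z : Fin d → ℤ) :
    Summable (fun x : Fin d → ℤ => |v x * u (x - z)|) := by
  apply Summable.of_nonneg_of_le (fun x => abs_nonneg _) (absmul_le u v z)
  exact (((sqSummable v).add (sqSummable_shift u z)).div_const 2)

lemma tsum_absmul_le (u v : E) (z : Fin d → ℤ) :
    ∑' x : Fin d → ℤ, |v x * u (x - z)| ≤
      ((∑' x : Fin d → ℤ, (v x)^2) + ∑' x : Fin d → ℤ, (u x)^2)/2 := by
  have h1 : ∑' x : Fin d → ℤ, (u (x - z))^2 = ∑' x : Fin d → ℤ, (u x)^2 :=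
    (Equiv.subRight z).tsum_eq (fun x => (u x)^2)
  calc ∑' x : Fin d → ℤ, |v x * u (x - z)|
      ≤ ∑' x : Fin d → ℤ, ((v x)^2 + (u (x - z))^2)/2 :=
        Summable.tsum_le_tsum (absmul_le u v z) (mulSummable u v z)
          (((sqSummable v).add (sqSummable_shift u z)).div_const 2)
    _ = ((∑' x : Fin d → ℤ, (v x)^2) + ∑' x : Fin d → ℤ, (u x)^2)/2 := by
        rw [tsum_div_const, Summable.tsum_add (sqSummable v) (sqSummable_shift u z), h1]

end Aux

section Aux2
variable {d : ℕ} {a : (Fin d → ℤ) → ℝ}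

local notation "E" => lp (fun _ : Fin d → ℤ => ℝ) 2
local notation "G" => (Fin d → ℤ)

lemma keyAbsSummable (ha : Summable fun z => |a z|) (u v : E) :
    Summable (fun p : G × G => |a p.1 * (v p.2 * u (p.2 - p.1))|) := by
  set C := ((∑' x : G, (v x)^2) + ∑' x : G, (u x)^2)/2 with hC
  apply (summable_prod_of_nonneg (fun p => abs_nonneg _)).mpr
  constructor
  · intro z
    simpa only [abs_mul] using ((mulSummable u v z).mul_left |a z|)
  · apply Summable.of_nonneg_of_le (fun z => tsum_nonneg (fun x => abs_nonneg _))
      (fun z => ?_) (ha.mul_right C)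
    calc ∑' x : G, |a z * (v x * u (x - z))|
        = |a z| * ∑' x : G, |v x * u (x - z)| := by
          rw [← tsum_mul_left]; simp only [abs_mul]
      _ ≤ |a z| * C := by
          exact mul_le_mul_of_nonneg_left (tsum_absmul_le u v z) (abs_nonneg _)

lemma keySummable (ha : Summable fun z => |a z|) (u v : E) :
    Summable (fun p : G × G => a p.1 * (v p.2 * u (p.2 - p.1))) :=
  summable_abs_iff.mp (keyAbsSummable ha u v)

end Aux2

section Aux3
variable {d : ℕ} {a : (Fin d → ℤ) → ℝ}

local notation "E" => lp (fun _ : Fin d → ℤ => ℝ) 2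
local notation "G" => (Fin d → ℤ)

lemma innerA (A : E →L[ℝ] E)
    (hA : ∀ (u : E) (x : G), A u x = ∑' x' : G, a (x - x') * u x')
    (ha : Summable fun z => |a z|) (u v : E) :
    (inner ℝ v (A u) : ℝ) = ∑' p : G × G, a p.1 * (v p.2 * u (p.2 - p.1)) := by
  have hsum := keySummable ha u v
  have hswap : Summable (fun q : G × G => a q.2 * (v q.1 * u (q.1 - q.2))) :=
    ((Equiv.prodComm G G).summable_iff).mpr hsum
  calc (inner ℝ v (A u) : ℝ) = ∑' x : G, v x * A u x := by
        rw [lp.inner_eq_tsum]; simp [RCLike.inner_apply, mul_comm]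
    _ = ∑' x : G, ∑' z : G, a z * (v x * u (x - z)) := by
        refine tsum_congr fun x => ?_
        rw [hA u x]
        have he : ∑' x' : G, a (x - x') * u x' = ∑' z : G, a z * u (x - z) := by
          refine ((Equiv.subLeft x).tsum_eq (fun x' => a (x - x') * u x')).symm.trans ?_
          refine tsum_congr fun z => ?_
          simp [Equiv.subLeft, _root_.sub_sub_cancel]
        rw [he, ← tsum_mul_left]
        exact tsum_congr fun z => by ring
    _ = ∑' p : G × G, a p.2 * (v p.1 * u (p.1 - p.2)) :=
        (Summable.tsum_prod' hswap (fun x => (hswap.prod_factor x))).symm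
    _ = ∑' p : G × G, a p.1 * (v p.2 * u (p.2 - p.1)) :=
        (Equiv.prodComm G G).tsum_eq (fun p => a p.1 * (v p.2 * u (p.2 - p.1)))

end Aux3

def flipE (d : ℕ) : ((Fin d → ℤ) × (Fin d → ℤ)) ≃ ((Fin d → ℤ) × (Fin d → ℤ)) where
  toFun p := (-p.1, p.2 - p.1)
  invFun p := (-p.1, p.2 - p.1)
  left_inv p := by simp [Prod.ext_iff, sub_neg_eq_add]
  right_inv p := by simp [Prod.ext_iff, sub_neg_eq_add]

section Aux4
variable {d : ℕ} {a : (Fin d → ℤ) → ℝ}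

local notation "E" => lp (fun _ : Fin d → ℤ => ℝ) 2
local notation "G" => (Fin d → ℤ)

lemma Bsymm (hsymm : ∀ z, a z = a (-z)) (u v : E) :
    ∑' p : G × G, a p.1 * (v p.2 * u (p.2 - p.1)) =
      ∑' p : G × G, a p.1 * (u p.2 * v (p.2 - p.1)) := by
  refine Eq.trans ?_ ((flipE d).tsum_eq (fun p => a p.1 * (u p.2 * v (p.2 - p.1))))
  refine tsum_congr fun p => ?_
  show a p.1 * (v p.2 * u (p.2 - p.1)) = a (-p.1) * (u (p.2 - p.1) * v (p.2 - p.1 - -p.1))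
  rw [← hsymm p.1, sub_neg_eq_add, sub_add_cancel]
  ring

lemma innerA_nonpos (A : E →L[ℝ] E)
    (hA : ∀ (u : E) (x : G), A u x = ∑' x' : G, a (x - x') * u x')
    (ha : Summable fun z => |a z|)
    (hnonneg : ∀ z, z ≠ (0 : G) → 0 ≤ a z)
    (htot : ∑' z, a z = 0) (u : E) :
    (inner ℝ u (A u) : ℝ) ≤ 0 := by
  set U := ∑' x : G, (u x)^2 with hUdef
  set c : G → ℝ := fun z => ∑' x : G, u x * u (x - z) with hcdef
  have hc : ∀ z : G, |c z| ≤ U := by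
    intro z
    have h1 : |∑' x : G, u x * u (x - z)| ≤ ∑' x : G, |u x * u (x - z)| := by
      have := norm_tsum_le_tsum_norm (f := fun x : G => u x * u (x - z))
        (by simpa only [Real.norm_eq_abs] using mulSummable u u z)
      simpa only [Real.norm_eq_abs] using this
    have h2 := tsum_absmul_le u u z
    have : (U + U)/2 = U := by ring
    rw [hcdef]
    simp only []
    linarith
  have hc0 : c 0 = U := by
    rw [hcdef, hUdef]
    exact tsum_congr fun x => by rw [sub_zero, ← sq]
  have key := keySummable ha u u
  have hsummand : ∀ z : G, a z * c z ≤ a z * U := by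
    intro z
    by_cases hz : z = (0 : G)
    · subst hz; rw [hc0]
    · exact mul_le_mul_of_nonneg_left ((le_abs_self _).trans (hc z)) (hnonneg z hz)
  have hS1 : Summable (fun z : G => a z * c z) := by
    apply summable_abs_iff.mp
    apply Summable.of_nonneg_of_le (fun z => abs_nonneg _) (fun z => ?_) (ha.mul_right U)
    rw [abs_mul]
    exact mul_le_mul_of_nonneg_left (hc z) (abs_nonneg _)
  calc (inner ℝ u (A u) : ℝ)
      = ∑' z : G, ∑' x : G, a z * (u x * u (x - z)) :=
        (innerA A hA ha u u).trans (Summable.tsum_prod' key (fun z => key.prod_factor z))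
    _ = ∑' z : G, a z * c z := tsum_congr fun z => tsum_mul_left
    _ ≤ ∑' z : G, a z * U :=
        Summable.tsum_le_tsum hsummand hS1 ((summable_abs_iff.mp ha).mul_right U)
    _ = (∑' z : G, a z) * U := tsum_mul_right
    _ = 0 := by rw [htot, zero_mul]

end Aux4

section Aux5
variable {d N : ℕ} {a : (Fin d → ℤ) → ℝ}

local notation "E" => lp (fun _ : Fin d → ℤ => ℝ) 2
local notation "G" => (Fin d → ℤ)

lemma innerH (A H : E →L[ℝ] E)
    (hA : ∀ (u : E) (x : G), A u x = ∑' x' : G, a (x - x') * u x')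
    (ha : Summable fun z => |a z|)
    (X : Fin N → G) (β : Fin N → ℝ)
    (hH : ∀ (u : E) (x : G),
      H u x = A u x + ∑ j : Fin N, if x = X j then β j * u x else 0)
    (u v : E) :
    (inner ℝ v (H u) : ℝ) = (∑' p : G × G, a p.1 * (v p.2 * u (p.2 - p.1)))
      + ∑ j : Fin N, β j * (u (X j) * v (X j)) := by
  have hS1 : Summable (fun x : G => v x * A u x) := by
    have := lp.summable_inner (𝕜 := ℝ) v (A u)
    simpa [RCLike.inner_apply, mul_comm] using this
  have hS2 : ∀ j : Fin N, Summable (fun x : G => if x = X j then β j * (u x * v x) else 0) := by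
    intro j
    apply summable_of_ne_finset_zero (s := {X j})
    intro x hx
    simp only [Finset.mem_singleton] at hx
    simp [hx]
  calc (inner ℝ v (H u) : ℝ) = ∑' x : G, v x * H u x := by
        rw [lp.inner_eq_tsum]; simp [RCLike.inner_apply, mul_comm]
    _ = ∑' x : G, (v x * A u x
          + ∑ j : Fin N, if x = X j then β j * (u x * v x) else 0) := by
        refine tsum_congr fun x => ?_
        rw [hH u x, mul_add, Finset.mul_sum]
        congr 1
        refine Finset.sum_congr rfl fun j _ => ?_
        by_cases h : x = X j
        · simp only [if_pos h]; ring
        · simp only [if_neg h, mul_zero]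
    _ = (∑' x : G, v x * A u x)
          + ∑' x : G, ∑ j : Fin N, (if x = X j then β j * (u x * v x) else 0) :=
        Summable.tsum_add hS1 (summable_sum fun j _ => hS2 j)
    _ = (∑' p : G × G, a p.1 * (v p.2 * u (p.2 - p.1)))
          + ∑ j : Fin N, β j * (u (X j) * v (X j)) := by
        congr 1
        · have h1 : (inner ℝ v (A u) : ℝ) = ∑' x : G, v x * A u x := by
            rw [lp.inner_eq_tsum]; simp [RCLike.inner_apply, mul_comm]
          rw [← h1, innerA A hA ha u v]
        · rw [Summable.tsum_finsetSum (fun j _ => hS2 j)]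
          refine Finset.sum_congr rfl fun j _ => ?_
          exact (tsum_eq_single (X j) fun b hb => if_neg hb).trans (if_pos rfl)

end Aux5

section Aux6
variable {d N : ℕ} {a : (Fin d → ℤ) → ℝ}

local notation "E" => lp (fun _ : Fin d → ℤ => ℝ) 2
local notation "G" => (Fin d → ℤ)

lemma innerH_symm (A H : E →L[ℝ] E)
    (hsymm : ∀ z, a z = a (-z))
    (hA : ∀ (u : E) (x : G), A u x = ∑' x' : G, a (x - x') * u x')
    (ha : Summable fun z => |a z|)
    (X : Fin N → G) (β : Fin N → ℝ)
    (hH : ∀ (u : E) (x : G),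
      H u x = A u x + ∑ j : Fin N, if x = X j then β j * u x else 0)
    (u v : E) :
    (inner ℝ (H u) v : ℝ) = inner ℝ u (H v) := by
  calc (inner ℝ (H u) v : ℝ) = inner ℝ v (H u) := real_inner_comm _ _
    _ = (∑' p : G × G, a p.1 * (v p.2 * u (p.2 - p.1)))
          + ∑ j : Fin N, β j * (u (X j) * v (X j)) := innerH A H hA ha X β hH u v
    _ = (∑' p : G × G, a p.1 * (u p.2 * v (p.2 - p.1)))
          + ∑ j : Fin N, β j * (v (X j) * u (X j)) := by
        rw [Bsymm hsymm u v]
        congr 1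
        exact Finset.sum_congr rfl fun j _ => by ring
    _ = inner ℝ u (H v) := (innerH A H hA ha X β hH v u).symm

end Aux6

/-- The span of the eigenspaces of `H` corresponding to positive eigenvalues has
dimension at most `N`. -/
theorem rank_positive_eigenspaces_le (d : ℕ) (hd : 1 ≤ d) (a : (Fin d → ℤ) → ℝ)
    (hsymm : ∀ z, a z = a (-z))
    (hnonneg : ∀ z, z ≠ 0 → 0 ≤ a z)
    (hneg : a 0 < 0)
    (hsum : Summable fun z => |a z|)
    (htot : ∑' z, a z = 0)
    (hirr : ∀ z : Fin d → ℤ, ∃ (k : ℕ) (zs : Fin k → Fin d → ℤ),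
      z = ∑ i, zs i ∧ ∀ i, a (zs i) ≠ 0)
    (A : lp (fun _ : Fin d → ℤ => ℝ) 2 →L[ℝ] lp (fun _ : Fin d → ℤ => ℝ) 2)
    (hA : ∀ (u : lp (fun _ : Fin d → ℤ => ℝ) 2) (x : Fin d → ℤ),
      A u x = ∑' x' : Fin d → ℤ, a (x - x') * u x')
    (N : ℕ) (hN : 1 ≤ N) (X : Fin N → Fin d → ℤ) (hX : Function.Injective X)
    (β : Fin N → ℝ) (hβ : ∀ j, 0 < β j)
    (H : lp (fun _ : Fin d → ℤ => ℝ) 2 →L[ℝ] lp (fun _ : Fin d → ℤ => ℝ) 2)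
    (hH : ∀ (u : lp (fun _ : Fin d → ℤ => ℝ) 2) (x : Fin d → ℤ),
      H u x = A u x + ∑ j : Fin N, if x = X j then β j * u x else 0) :
    Module.rank ℝ
      ↥(Submodule.span ℝ {f : lp (fun _ : Fin d → ℤ => ℝ) 2 |
          ∃ lam : ℝ, 0 < lam ∧ H f = lam • f}) ≤ (N : Cardinal) := by
  classical
  set E := lp (fun _ : Fin d → ℤ => ℝ) 2
  set S : Set E := {f : E | ∃ lam : ℝ, 0 < lam ∧ H f = lam • f} with hS
  -- eigenspaces, indexed by positive reals
  set p : {l : ℝ // 0 < l} → Submodule ℝ E :=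
    fun l => LinearMap.ker ((H : E →ₗ[ℝ] E) - l.1 • LinearMap.id) with hpdef
  have hp : ∀ (l : {l : ℝ // 0 < l}) (f : E), f ∈ p l ↔ H f = l.1 • f := by
    intro l f
    simp [hpdef, LinearMap.mem_ker, LinearMap.sub_apply, LinearMap.smul_apply,
      sub_eq_zero]
  have hle : Submodule.span ℝ S ≤ ⨆ l, p l := by
    rw [Submodule.span_le]
    rintro f ⟨lam, hlam, hf⟩
    exact Submodule.mem_iSup_of_mem ⟨lam, hlam⟩ ((hp ⟨lam, hlam⟩ f).mpr hf)
  -- key injectivity claim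
  have key : ∀ g : E, g ∈ (⨆ l, p l : Submodule ℝ E) → (∀ j, g (X j) = 0) → g = 0 := by
    intro g hg hzero
    rw [Submodule.mem_iSup_iff_exists_finsupp] at hg
    obtain ⟨F, hF, hFsum⟩ := hg
    have hFe : ∀ l, H (F l) = l.1 • F l := fun l => (hp l (F l)).mp (hF l)
    have hg' : g = ∑ l ∈ F.support, F l := by rw [← hFsum]; rfl
    have horth : ∀ l m : {l : ℝ // 0 < l}, l ≠ m → (inner ℝ (F l) (F m) : ℝ) = 0 := by
      intro l m hlm
      have h1 : (inner ℝ (H (F l)) (F m) : ℝ) = inner ℝ (F l) (H (F m)) :=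
        innerH_symm A H hsymm hA hsum X β hH (F l) (F m)
      rw [hFe l, hFe m, real_inner_smul_left, real_inner_smul_right] at h1
      have hne : l.1 - m.1 ≠ 0 := sub_ne_zero.mpr (fun h => hlm (Subtype.ext h))
      have : (l.1 - m.1) * (inner ℝ (F l) (F m) : ℝ) = 0 := by ring_nf; linarith [h1]
      exact (mul_eq_zero.mp this).resolve_left hne
    have hQ : (inner ℝ g (H g) : ℝ) =
        ∑ m ∈ F.support, m.1 * (inner ℝ (F m) (F m) : ℝ) := by
      conv_lhs => rw [hg']
      rw [map_sum, inner_sum]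
      refine Finset.sum_congr rfl fun m hm => ?_
      rw [hFe m, real_inner_smul_right, sum_inner,
        Finset.sum_eq_single_of_mem m hm (fun l _ hne => horth l m hne)]
    have hQ2 : (inner ℝ g (H g) : ℝ) ≤ 0 := by
      have hAneg := innerA_nonpos A hA hsum hnonneg htot g
      rw [innerA A hA hsum g g] at hAneg
      rw [innerH A H hA hsum X β hH g g]
      simp only [hzero, mul_zero, zero_mul, Finset.sum_const_zero, add_zero]
      exact hAneg
    have hterm0 : ∀ l ∈ F.support, l.1 * (inner ℝ (F l) (F l) : ℝ) = 0 := by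
      have hnn : ∀ l ∈ F.support, 0 ≤ l.1 * (inner ℝ (F l) (F l) : ℝ) :=
        fun l _ => mul_nonneg l.2.le real_inner_self_nonneg
      have hsum0 : ∑ m ∈ F.support, m.1 * (inner ℝ (F m) (F m) : ℝ) = 0 :=
        le_antisymm (hQ ▸ hQ2) (Finset.sum_nonneg hnn)
      exact (Finset.sum_eq_zero_iff_of_nonneg hnn).mp hsum0
    have hF0 : ∀ l ∈ F.support, F l = 0 := by
      intro l hl
      have := hterm0 l hl
      have h2 : (inner ℝ (F l) (F l) : ℝ) = 0 := by
        rcases mul_eq_zero.mp this with h | h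
        · exact absurd h (ne_of_gt l.2)
        · exact h
      exact inner_self_eq_zero.mp h2
    rw [hg']
    exact Finset.sum_eq_zero hF0
  -- evaluation map
  let Φ : E →ₗ[ℝ] (Fin N → ℝ) :=
    { toFun := fun f => fun j => f (X j)
      map_add' := by intro f g; funext j; simp [lp.coeFn_add]
      map_smul' := by
        intro c f; funext j
        have := lp.coeFn_smul c f
        rw [RingHom.id_apply]
        simp [this] }
  let ψ := Φ.comp (Submodule.span ℝ S).subtype
  have hinj : Function.Injective ψ := by
    rw [injective_iff_map_eq_zero]
    intro g hg0
    have hz : ∀ j, (g : E) (X j) = 0 := fun j => congrFun hg0 j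
    exact Subtype.ext (key (g : E) (hle g.2) hz)
  have := LinearMap.rank_le_of_injective ψ hinj
  rwa [rank_fin_fun N] at this
end

section
/- The largest eigenvalue γ(λ) of the matrix G(λ), which (by the Perron–Frobenius theorem, G(λ) having strictly positive entries) equals the spectral radius of G(λ), is a continuous and strictly decreasing function of λ on (0, ∞): for all 0 < λ'' < λ' one has γ(λ') < γ(λ''), and λ ↦ γ(λ) is continuous on (0, ∞). -/
open MeasureTheory ENNReal

section AuxLemmas

open Matrix

private lemma oneDim_aux (m : ℤ) :
    ∫ t in Set.Icc (-Real.pi) Real.pi, Complex.exp (t * m * Complex.I) =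
      ((if m = 0 then 2 * Real.pi else 0 : ℝ) : ℂ) := by
  rw [MeasureTheory.integral_Icc_eq_integral_Ioc,
    ← intervalIntegral.integral_of_le (neg_le_self Real.pi_pos.le)]
  rcases eq_or_ne m 0 with hm | hm
  · simp [hm, two_mul]
  · have hc : ((m : ℂ) * Complex.I) ≠ 0 := by
      simp [Complex.I_ne_zero, Int.cast_ne_zero, hm]
    have : ∀ t : ℝ, Complex.exp (t * m * Complex.I) = Complex.exp ((m * Complex.I) * t) := by
      intro t; ring_nf
    simp_rw [this]
    rw [integral_exp_mul_complex hc]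
    have key : Complex.exp ((m : ℂ) * Complex.I * (Real.pi : ℝ))
        - Complex.exp ((m : ℂ) * Complex.I * ((-Real.pi : ℝ) : ℂ)) = 0 := by
      have h : ((m : ℂ) * Complex.I * (Real.pi : ℝ) : ℂ)
          = (m : ℂ) * (2 * (Real.pi : ℂ) * Complex.I)
            + (m : ℂ) * Complex.I * ((-Real.pi : ℝ) : ℂ) := by
        push_cast; ring
      rw [h, Complex.exp_add, Complex.exp_int_mul_two_pi_mul_I, one_mul, sub_self]
    rw [key, zero_div]
    simp [hm]

private lemma contAux_aux {d : ℕ} (z : Fin d → ℤ) :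
    Continuous fun θ : Fin d → ℝ =>
      Complex.exp ((∑ i, θ i * (z i : ℝ) : ℝ) * Complex.I) := by
  fun_prop

private lemma boxIntC_aux (d : ℕ) (z : Fin d → ℤ) :
    ∫ θ in Set.Icc (fun _ : Fin d => -Real.pi) (fun _ => Real.pi),
      Complex.exp ((∑ i, θ i * (z i : ℝ) : ℝ) * Complex.I) =
      ((∏ i, (if z i = 0 then 2 * Real.pi else 0) : ℝ) : ℂ) := by
  have hind : (Set.Icc (fun _ : Fin d => -Real.pi) (fun _ => Real.pi)).indicator
      (fun θ : Fin d → ℝ => Complex.exp ((∑ i, θ i * (z i : ℝ) : ℝ) * Complex.I)) =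
      fun θ : Fin d → ℝ => ∏ i, (Set.Icc (-Real.pi) Real.pi).indicator
        (fun t : ℝ => Complex.exp (t * (z i : ℝ) * Complex.I)) (θ i) := by
    funext θ
    by_cases hθ : θ ∈ Set.Icc (fun _ : Fin d => -Real.pi) (fun _ => Real.pi)
    · rw [Set.indicator_of_mem hθ]
      obtain ⟨h1, h2⟩ := hθ
      have hmem : ∀ i, θ i ∈ Set.Icc (-Real.pi) Real.pi := fun i => ⟨h1 i, h2 i⟩
      rw [Finset.prod_congr rfl (fun i _ => Set.indicator_of_mem (hmem i) _)]
      rw [← Complex.exp_sum]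
      congr 1
      push_cast [Finset.sum_mul]
      ring_nf
      exact Finset.sum_congr rfl fun i _ => by ring
    · rw [Set.indicator_of_notMem hθ]
      have : ∃ i, θ i ∉ Set.Icc (-Real.pi) Real.pi := by
        by_contra h
        push_neg at h
        exact hθ ⟨fun i => (h i).1, fun i => (h i).2⟩
      obtain ⟨i, hi⟩ := this
      exact (Finset.prod_eq_zero (Finset.mem_univ i)
        (by rw [Set.indicator_of_notMem hi])).symm
  rw [← integral_indicator measurableSet_Icc, hind]
  beta_reduce
  rw [MeasureTheory.volume_pi,
    MeasureTheory.integral_fintype_prod_eq_prod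
      (fun i => (Set.Icc (-Real.pi) Real.pi).indicator
        (fun t : ℝ => Complex.exp (t * (z i : ℝ) * Complex.I)))]
  push_cast
  refine Finset.prod_congr rfl fun i _ => ?_
  rw [integral_indicator measurableSet_Icc, oneDim_aux (z i)]

private lemma boxInt_aux (d : ℕ) (z : Fin d → ℤ) :
    ∫ θ in Set.Icc (fun _ : Fin d => -Real.pi) (fun _ => Real.pi),
      Real.cos (∑ i, θ i * (z i : ℝ)) = ∏ i, (if z i = 0 then 2 * Real.pi else 0) := by
  have hint : IntegrableOn
      (fun θ : Fin d → ℝ => Complex.exp ((∑ i, θ i * (z i : ℝ) : ℝ) * Complex.I))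
      (Set.Icc (fun _ : Fin d => -Real.pi) (fun _ => Real.pi)) :=
    (contAux_aux z).integrableOn_Icc
  have : ∀ θ : Fin d → ℝ, Real.cos (∑ i, θ i * (z i : ℝ)) =
      (Complex.exp ((∑ i, θ i * (z i : ℝ) : ℝ) * Complex.I)).re := fun θ =>
    (Complex.exp_ofReal_mul_I_re _).symm
  simp_rw [this]
  simp_rw [← RCLike.re_to_complex]
  rw [integral_re hint, RCLike.re_to_complex, boxIntC_aux]
  norm_cast

private lemma trigIdent_aux {N : ℕ} (c u : Fin N → ℝ) :
    ∑ i, ∑ j, c i * c j * Real.cos (u j - u i) =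
      (∑ i, c i * Real.cos (u i))^2 + (∑ i, c i * Real.sin (u i))^2 := by
  simp_rw [Real.cos_sub, pow_two, Finset.sum_mul_sum, ← Finset.sum_add_distrib]
  exact Finset.sum_congr rfl fun i _ => Finset.sum_congr rfl fun j _ => by ring

private lemma sumSub_aux {d N : ℕ} (X : Fin N → Fin d → ℤ) (θ : Fin d → ℝ) (i j : Fin N) :
    (∑ k, θ k * ((X j - X i) k : ℝ)) =
      (∑ k, θ k * (X j k : ℝ)) - (∑ k, θ k * (X i k : ℝ)) := by
  rw [← Finset.sum_sub_distrib]
  exact Finset.sum_congr rfl fun k _ => by push_cast [Pi.sub_apply]; ring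

private lemma prodIf_aux {d N : ℕ} (X : Fin N → Fin d → ℤ) (hX : Function.Injective X)
    (i j : Fin N) :
    (∏ k, if (X j - X i) k = 0 then 2 * Real.pi else 0) =
      if j = i then (2 * Real.pi)^d else 0 := by
  rcases eq_or_ne j i with h | h
  · subst h
    simp [Pi.sub_apply, Finset.prod_const]
  · have : X j - X i ≠ 0 := sub_ne_zero.mpr (fun hc => h (hX hc))
    obtain ⟨k, hk⟩ := Function.ne_iff.mp this
    rw [if_neg h]
    exact Finset.prod_eq_zero (Finset.mem_univ k) (if_neg hk)

private lemma quadLower_aux {d N : ℕ} (X : Fin N → Fin d → ℤ) (hX : Function.Injective X)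
    (w : (Fin d → ℝ) → ℝ) (hw : Continuous w) (m : ℝ) (hm0 : 0 ≤ m)
    (hm : ∀ θ ∈ Set.Icc (fun _ : Fin d => -Real.pi) (fun _ : Fin d => Real.pi), m ≤ w θ)
    (c : Fin N → ℝ) :
    m * (2 * Real.pi)^d * ∑ i, (c i)^2 ≤
      ∑ i, ∑ j, c i * c j *
        ∫ θ in Set.Icc (fun _ : Fin d => -Real.pi) (fun _ : Fin d => Real.pi),
          Real.cos (∑ k, θ k * ((X j - X i) k : ℝ)) * w θ := by
  set B := Set.Icc (fun _ : Fin d => -Real.pi) (fun _ : Fin d => Real.pi) with hBdef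
  set P : (Fin d → ℝ) → ℝ :=
    fun θ => ∑ i, ∑ j, c i * c j * Real.cos (∑ k, θ k * ((X j - X i) k : ℝ)) with hPdef
  have hcos : ∀ i j : Fin N, Continuous fun θ : Fin d → ℝ =>
      Real.cos (∑ k, θ k * ((X j - X i) k : ℝ)) := by
    intro i j
    exact Real.continuous_cos.comp (continuous_finset_sum _ fun k _ =>
      (continuous_apply k).mul continuous_const)
  have hPcont : Continuous P :=
    continuous_finset_sum _ fun i _ => continuous_finset_sum _ fun j _ =>
      continuous_const.mul (hcos i j)
  have hPnonneg : ∀ θ, 0 ≤ P θ := by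
    intro θ
    have : P θ = (∑ i, c i * Real.cos (∑ k, θ k * (X i k : ℝ)))^2 +
        (∑ i, c i * Real.sin (∑ k, θ k * (X i k : ℝ)))^2 := by
      rw [hPdef, ← trigIdent_aux c (fun i => ∑ k, θ k * (X i k : ℝ))]
      exact Finset.sum_congr rfl fun i _ => Finset.sum_congr rfl fun j _ => by
        rw [sumSub_aux X θ i j]
    rw [this]; positivity
  have hint : ∀ i j : Fin N, IntegrableOn
      (fun θ => Real.cos (∑ k, θ k * ((X j - X i) k : ℝ)) * w θ) B :=
    fun i j => ((hcos i j).mul hw).integrableOn_Icc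
  have hInt2 : ∀ i j : Fin N, Integrable
      (fun θ => c i * c j * (Real.cos (∑ k, θ k * ((X j - X i) k : ℝ)) * w θ))
      (volume.restrict B) := fun i j => ((hint i j).const_mul _)
  have h1 : (∫ θ in B, ∑ i, ∑ j, c i * c j *
        (Real.cos (∑ k, θ k * ((X j - X i) k : ℝ)) * w θ))
      = ∑ i, ∑ j, c i * c j *
        ∫ θ in B, Real.cos (∑ k, θ k * ((X j - X i) k : ℝ)) * w θ := by
    rw [integral_finset_sum _ (fun i _ => integrable_finset_sum _ (fun j _ => hInt2 i j))]
    exact Finset.sum_congr rfl fun i _ => by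
      rw [integral_finset_sum _ (fun j _ => hInt2 i j)]
      exact Finset.sum_congr rfl fun j _ => integral_const_mul _ _
  rw [← h1]
  have hPint : (∫ θ in B, P θ) = (2 * Real.pi)^d * ∑ i, (c i)^2 := by
    rw [hPdef]
    rw [integral_finset_sum _ (fun i _ => integrable_finset_sum _ (fun j _ =>
      (((hcos i j).integrableOn_Icc).const_mul _ : Integrable _ _)))]
    have : ∀ i : Fin N, (∑ j, ∫ θ in B, c i * c j *
        Real.cos (∑ k, θ k * ((X j - X i) k : ℝ))) = c i * c i * (2 * Real.pi)^d := by
      intro i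
      have : ∀ j : Fin N, (∫ θ in B, c i * c j *
          Real.cos (∑ k, θ k * ((X j - X i) k : ℝ)))
          = c i * c j * (if j = i then (2 * Real.pi)^d else 0) := by
        intro j
        rw [integral_const_mul, boxInt_aux d (X j - X i), prodIf_aux X hX i j]
      simp_rw [this]
      simp [Finset.sum_ite_eq', mul_ite, mul_zero]
    have h2 : ∀ i : Fin N, (∫ θ in B, ∑ j, c i * c j *
        Real.cos (∑ k, θ k * ((X j - X i) k : ℝ)))
        = ∑ j, ∫ θ in B, c i * c j * Real.cos (∑ k, θ k * ((X j - X i) k : ℝ)) := by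
      intro i
      exact integral_finset_sum _ (fun j _ => (((hcos i j).integrableOn_Icc).const_mul _))
    simp_rw [← hBdef, h2, this]
    rw [Finset.mul_sum]
    exact Finset.sum_congr rfl fun i _ => by ring
  calc m * (2 * Real.pi)^d * ∑ i, (c i)^2 = ∫ θ in B, m * P θ := by
        rw [integral_const_mul, hPint]; ring
    _ ≤ ∫ θ in B, ∑ i, ∑ j, c i * c j *
          (Real.cos (∑ k, θ k * ((X j - X i) k : ℝ)) * w θ) := by
        apply setIntegral_mono_on
        · exact (hPcont.integrableOn_Icc).const_mul _
        · exact integrable_finset_sum _ (fun i _ => integrable_finset_sum _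
            (fun j _ => hInt2 i j))
        · exact measurableSet_Icc
        · intro θ hθ
          have hfac : ∑ i, ∑ j, c i * c j *
              (Real.cos (∑ k, θ k * ((X j - X i) k : ℝ)) * w θ) = P θ * w θ := by
            rw [hPdef, Finset.sum_mul]
            exact Finset.sum_congr rfl fun i _ => by
              rw [Finset.sum_mul]
              exact Finset.sum_congr rfl fun j _ => by ring
          rw [hfac]
          calc m * P θ ≤ w θ * P θ :=
                mul_le_mul_of_nonneg_right (hm θ hθ) (hPnonneg θ)
            _ = P θ * w θ := mul_comm _ _

private lemma quadLower'_aux {d N : ℕ} (X : Fin N → Fin d → ℤ) (hX : Function.Injective X)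
    (w : (Fin d → ℝ) → ℝ) (hw : Continuous w) (m : ℝ) (hm0 : 0 ≤ m)
    (hm : ∀ θ ∈ Set.Icc (fun _ : Fin d => -Real.pi) (fun _ : Fin d => Real.pi), m ≤ w θ)
    (c : Fin N → ℝ) :
    m * ∑ i, (c i)^2 ≤ ((2 * Real.pi)^d)⁻¹ *
      ∑ i, ∑ j, c i * c j *
        ∫ θ in Set.Icc (fun _ : Fin d => -Real.pi) (fun _ : Fin d => Real.pi),
          Real.cos (∑ k, θ k * ((X j - X i) k : ℝ)) * w θ := by
  have h := quadLower_aux X hX w hw m hm0 hm c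
  have hp : (0:ℝ) < (2 * Real.pi)^d := by positivity
  have := mul_le_mul_of_nonneg_left h (le_of_lt (inv_pos.mpr hp))
  calc m * ∑ i, (c i)^2
      = ((2 * Real.pi)^d)⁻¹ * (m * (2 * Real.pi)^d * ∑ i, (c i)^2) := by
        rw [show m * (2 * Real.pi)^d * ∑ i, (c i)^2
          = (2 * Real.pi)^d * (m * ∑ i, (c i)^2) from by ring, ← mul_assoc,
          inv_mul_cancel₀ hp.ne', one_mul]
    _ ≤ _ := this

private lemma aux_spec {N : ℕ} (hN : 1 ≤ N) (S : Matrix (Fin N) (Fin N) ℝ) (hS : S.PosDef) :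
    ∃ μ : ℝ, 0 ≤ μ ∧
      (spectralRadius ℂ (S.map (fun r => (r : ℂ)))).toReal = μ ∧
      μ ∈ spectrum ℝ S ∧
      (∃ v : Fin N → ℝ, v ⬝ᵥ v = 1 ∧ v ⬝ᵥ (S *ᵥ v) = μ) ∧
      ∀ c : Fin N → ℝ, c ⬝ᵥ (S *ᵥ c) ≤ μ * (c ⬝ᵥ c) := by
  haveI : Nonempty (Fin N) := Fin.pos_iff_nonempty.mp hN
  have hH : S.IsHermitian := hS.1
  set ev : Fin N → ℝ := hH.eigenvalues with hev
  have hpos : ∀ i, 0 < ev i := hS.eigenvalues_pos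
  obtain ⟨i0, -, hmax⟩ := Finset.exists_max_image Finset.univ ev
    ⟨Classical.arbitrary _, Finset.mem_univ _⟩
  refine ⟨ev i0, (hpos i0).le, ?_, hH.eigenvalues_mem_spectrum_real i0, ?_, ?_⟩
  · -- spectral radius computation
    set U : Matrix (Fin N) (Fin N) ℝ := (hH.eigenvectorUnitary : Matrix (Fin N) (Fin N) ℝ)
    have hU1 : U * star U = 1 := (Matrix.mem_unitaryGroup_iff).mp hH.eigenvectorUnitary.2
    have hU2 : star U * U = 1 := (Matrix.mem_unitaryGroup_iff').mp hH.eigenvectorUnitary.2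
    have hST : S = U * Matrix.diagonal (RCLike.ofReal ∘ ev) * star U := hH.spectral_theorem
    set f : Matrix (Fin N) (Fin N) ℝ →+* Matrix (Fin N) (Fin N) ℂ :=
      (Complex.ofRealHom.mapMatrix)
    have hmapS : S.map (fun r => (r : ℂ)) = f S := rfl
    set u : (Matrix (Fin N) (Fin N) ℂ)ˣ :=
      ⟨f U, f (star U), by rw [← _root_.map_mul, hU1, _root_.map_one],
        by rw [← _root_.map_mul, hU2, _root_.map_one]⟩
    have hconj : f S = (u : Matrix (Fin N) (Fin N) ℂ) *
        Matrix.diagonal (fun i => (ev i : ℂ)) * ((u⁻¹ : _ˣ) : Matrix (Fin N) (Fin N) ℂ) := by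
      rw [hST, _root_.map_mul, _root_.map_mul]
      congr 1
      · congr 1
        show (Matrix.diagonal (RCLike.ofReal ∘ ev)).map ⇑Complex.ofRealHom = _
        rw [Matrix.diagonal_map (by simp)]
        congr
    have hspec : spectrum ℂ (S.map (fun r => (r : ℂ))) =
        Set.range (fun i => (ev i : ℂ)) := by
      rw [hmapS, hconj, spectrum.units_conjugate, spectrum_diagonal]
    have hrad : spectralRadius ℂ (S.map (fun r => (r : ℂ))) = ENNReal.ofReal (ev i0) := by
      rw [spectralRadius]
      apply le_antisymm
      · refine iSup₂_le fun k hk => ?_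
        rw [hspec] at hk
        obtain ⟨i, rfl⟩ := hk
        rw [← enorm_eq_nnnorm, ← ofReal_norm]
        apply ENNReal.ofReal_le_ofReal
        rw [Complex.norm_real, Real.norm_eq_abs, _root_.abs_of_nonneg (hpos i).le]
        exact hmax i (Finset.mem_univ i)
      · have hmem : ((ev i0 : ℂ)) ∈ spectrum ℂ (S.map (fun r => (r : ℂ))) := by
          rw [hspec]; exact ⟨i0, rfl⟩
        have := le_iSup₂ (f := fun (k : ℂ) (_ : k ∈ spectrum ℂ (S.map (fun r => (r : ℂ)))) =>
          (‖k‖₊ : ENNReal)) _ hmem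
        refine le_trans (le_of_eq ?_) this
        rw [← enorm_eq_nnnorm, ← ofReal_norm, Complex.norm_real, Real.norm_eq_abs,
          _root_.abs_of_nonneg (hpos i0).le]
    rw [hrad, ENNReal.toReal_ofReal (hpos i0).le]
  · -- eigenvector attaining
    refine ⟨⇑(hH.eigenvectorBasis i0), ?_, ?_⟩
    · have hn : ‖hH.eigenvectorBasis i0‖ = 1 := hH.eigenvectorBasis.orthonormal.1 i0
      have : (⇑(hH.eigenvectorBasis i0) : Fin N → ℝ) ⬝ᵥ ⇑(hH.eigenvectorBasis i0) =
          inner ℝ (hH.eigenvectorBasis i0) (hH.eigenvectorBasis i0) := by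
        rw [PiLp.inner_apply]
        simp [dotProduct, pow_two]
      rw [this, real_inner_self_eq_norm_sq, hn]; norm_num
    · rw [hH.mulVec_eigenvectorBasis]
      have hn : ‖hH.eigenvectorBasis i0‖ = 1 := hH.eigenvectorBasis.orthonormal.1 i0
      have h1 : (⇑(hH.eigenvectorBasis i0) : Fin N → ℝ) ⬝ᵥ ⇑(hH.eigenvectorBasis i0) = 1 := by
        have : (⇑(hH.eigenvectorBasis i0) : Fin N → ℝ) ⬝ᵥ ⇑(hH.eigenvectorBasis i0) =
            inner ℝ (hH.eigenvectorBasis i0) (hH.eigenvectorBasis i0) := by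
          rw [PiLp.inner_apply]; simp [dotProduct, pow_two]
        rw [this, real_inner_self_eq_norm_sq, hn]; norm_num
      rw [dotProduct_smul, h1]
      simp [hev]
  · -- Rayleigh bound
    intro c
    set U : Matrix (Fin N) (Fin N) ℝ := (hH.eigenvectorUnitary : Matrix (Fin N) (Fin N) ℝ)
    have hU1 : U * star U = 1 := (Matrix.mem_unitaryGroup_iff).mp hH.eigenvectorUnitary.2
    have hST : S = U * Matrix.diagonal (RCLike.ofReal ∘ ev) * star U := hH.spectral_theorem
    have hstar : star U = Uᵀ := rfl
    set w : Fin N → ℝ := Uᵀ *ᵥ c with hw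
    have hww : w ⬝ᵥ w = c ⬝ᵥ c := by
      rw [hw, Matrix.dotProduct_mulVec, Matrix.vecMul_transpose, Matrix.mulVec_mulVec,
        ← hstar, hU1, Matrix.one_mulVec]
    have hquad : c ⬝ᵥ (S *ᵥ c) = ∑ i, ev i * (w i)^2 := by
      rw [hST, hstar, ← Matrix.mulVec_mulVec, ← Matrix.mulVec_mulVec,
        Matrix.dotProduct_mulVec, ← Matrix.mulVec_transpose]
      simp only [dotProduct, Matrix.mulVec_diagonal]
      exact Finset.sum_congr rfl fun i _ => by
        simp only [Function.comp_apply, RCLike.ofReal_real_eq_id, id_eq]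
        ring
    rw [hquad, ← hww]
    have hterm : ∀ i, ev i * (w i)^2 ≤ ev i0 * (w i)^2 := fun i =>
      mul_le_mul_of_nonneg_right (hmax i (Finset.mem_univ i)) (sq_nonneg _)
    calc ∑ i, ev i * (w i)^2 ≤ ∑ i, ev i0 * (w i)^2 :=
          Finset.sum_le_sum fun i _ => hterm i
      _ = ev i0 * (w ⬝ᵥ w) := by
          rw [← Finset.mul_sum, dotProduct]; simp_rw [pow_two]

end AuxLemmas

open Matrix

/-- The largest eigenvalue `γ(λ)` of the positive matrix `G(λ)` (equal to its spectral
radius) is an eigenvalue of `G(λ)`, and is a continuous, strictly decreasing function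
of `λ` on `(0, ∞)`. -/
theorem gamma_continuous_strictAnti (d : ℕ) (hd : 1 ≤ d) (a : (Fin d → ℤ) → ℝ)
    (hsymm : ∀ z, a z = a (-z))
    (hnonneg : ∀ z, z ≠ 0 → 0 ≤ a z)
    (hneg : a 0 < 0)
    (hsum : Summable fun z => |a z|)
    (htot : ∑' z, a z = 0)
    (hirr : ∀ z : Fin d → ℤ, ∃ (k : ℕ) (zs : Fin k → Fin d → ℤ),
      z = ∑ i, zs i ∧ ∀ i, a (zs i) ≠ 0)
    (N : ℕ) (hN : 1 ≤ N) (X : Fin N → Fin d → ℤ) (hX : Function.Injective X)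
    (β : Fin N → ℝ) (hβ : ∀ j, 0 < β j)
    (phi : (Fin d → ℝ) → ℝ)
    (hphi : ∀ θ, phi θ = ∑' z : Fin d → ℤ, a z * Real.cos (∑ i, θ i * (z i : ℝ)))
    (I : ℝ → (Fin d → ℤ) → ℝ)
    (hI : ∀ (lam : ℝ) (x : Fin d → ℤ), I lam x = ((2 * Real.pi) ^ d)⁻¹ *
      ∫ θ in Set.Icc (fun _ : Fin d => -Real.pi) (fun _ : Fin d => Real.pi),
        Real.cos (∑ i, θ i * (x i : ℝ)) / (lam - phi θ))
    (G : ℝ → Matrix (Fin N) (Fin N) ℝ)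
    (hG : ∀ (lam : ℝ) (i j : Fin N), G lam i j = β j * I lam (X j - X i))
    (γ : ℝ → ℝ)
    (hγ : ∀ lam : ℝ, γ lam =
      (spectralRadius ℂ ((G lam).map (fun r => (r : ℂ)))).toReal) :
    (∀ lam : ℝ, 0 < lam → γ lam ∈ spectrum ℝ (G lam)) ∧
      StrictAntiOn γ (Set.Ioi 0) ∧ ContinuousOn γ (Set.Ioi 0) := by
  clear hd hsymm hneg hirr
  have hπ : (0:ℝ) < Real.pi := Real.pi_pos
  have h2πd : (0:ℝ) < (2 * Real.pi)^d := by positivity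
  set K := ∑' z : Fin d → ℤ, |a z| with hK
  have hK0 : 0 ≤ K := tsum_nonneg fun z => abs_nonneg _
  have hsuma : Summable a := hsum.of_abs
  have hcossum : ∀ θ : Fin d → ℝ,
      Summable fun z : Fin d → ℤ => a z * Real.cos (∑ i, θ i * (z i : ℝ)) := by
    intro θ
    refine Summable.of_norm_bounded hsum fun z => ?_
    rw [Real.norm_eq_abs, abs_mul]
    calc |a z| * |Real.cos (∑ i, θ i * (z i : ℝ))| ≤ |a z| * 1 :=
          mul_le_mul_of_nonneg_left (Real.abs_cos_le_one _) (abs_nonneg _)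
      _ = |a z| := mul_one _
  have hphile : ∀ θ, phi θ ≤ 0 := by
    intro θ
    rw [hphi θ]
    have hle : ∀ z : Fin d → ℤ, a z * Real.cos (∑ i, θ i * (z i : ℝ)) ≤ a z := by
      intro z
      rcases eq_or_ne z 0 with rfl | hz
      · simp
      · calc a z * Real.cos (∑ i, θ i * (z i : ℝ)) ≤ a z * 1 :=
              mul_le_mul_of_nonneg_left (Real.cos_le_one _) (hnonneg z hz)
          _ = a z := mul_one _
    calc (∑' z : Fin d → ℤ, a z * Real.cos (∑ i, θ i * (z i : ℝ)))
        ≤ ∑' z : Fin d → ℤ, a z := Summable.tsum_le_tsum hle (hcossum θ) hsuma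
      _ = 0 := htot
  have hphige : ∀ θ, -K ≤ phi θ := by
    intro θ
    rw [hphi θ, hK, ← tsum_neg]
    refine Summable.tsum_le_tsum (fun z => ?_) hsum.neg (hcossum θ)
    have h1 : |a z * Real.cos (∑ i, θ i * (z i : ℝ))| ≤ |a z| := by
      rw [abs_mul]
      calc |a z| * |Real.cos (∑ i, θ i * (z i : ℝ))| ≤ |a z| * 1 :=
            mul_le_mul_of_nonneg_left (Real.abs_cos_le_one _) (abs_nonneg _)
        _ = |a z| := mul_one _
    have h2 := neg_abs_le (a z * Real.cos (∑ i, θ i * (z i : ℝ)))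
    linarith
  have hphicont : Continuous phi := by
    have hfun : phi = fun θ => ∑' z : Fin d → ℤ, a z * Real.cos (∑ i, θ i * (z i : ℝ)) :=
      funext hphi
    rw [hfun]
    refine continuous_tsum (fun z => ?_) hsum (fun z θ => ?_)
    · exact continuous_const.mul (Real.continuous_cos.comp
        (continuous_finset_sum _ fun k _ => (continuous_apply k).mul continuous_const))
    · rw [Real.norm_eq_abs, abs_mul]
      calc |a z| * |Real.cos (∑ i, θ i * (z i : ℝ))| ≤ |a z| * 1 :=
            mul_le_mul_of_nonneg_left (Real.abs_cos_le_one _) (abs_nonneg _)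
        _ = |a z| := mul_one _
  have hden : ∀ lam : ℝ, 0 < lam → ∀ θ : Fin d → ℝ, 0 < lam - phi θ := by
    intro lam hl θ; have := hphile θ; linarith
  have hdenle : ∀ lam : ℝ, ∀ θ : Fin d → ℝ, lam - phi θ ≤ lam + K := by
    intro lam θ; have := hphige θ; linarith
  have hwcont : ∀ lam : ℝ, 0 < lam → Continuous fun θ : Fin d → ℝ => (lam - phi θ)⁻¹ :=
    fun lam hl => ((continuous_const.sub hphicont).inv₀ fun θ => (hden lam hl θ).ne')
  have hIw : ∀ (lam : ℝ) (x : Fin d → ℤ), I lam x = ((2 * Real.pi)^d)⁻¹ *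
      ∫ θ in Set.Icc (fun _ : Fin d => -Real.pi) (fun _ : Fin d => Real.pi),
        Real.cos (∑ i, θ i * (x i : ℝ)) * (lam - phi θ)⁻¹ := by
    intro lam x
    rw [hI]
    congr 1
  -- the symmetrized matrix
  set S : ℝ → Matrix (Fin N) (Fin N) ℝ := fun lam => Matrix.of fun i j =>
    Real.sqrt (β i) * Real.sqrt (β j) * I lam (X j - X i) with hSdef
  have hSapp : ∀ lam i j, S lam i j =
      Real.sqrt (β i) * Real.sqrt (β j) * I lam (X j - X i) := fun _ _ _ => rfl
  have hsqβ : ∀ j, Real.sqrt (β j) * Real.sqrt (β j) = β j :=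
    fun j => Real.mul_self_sqrt (hβ j).le
  have hsqβpos : ∀ j, 0 < Real.sqrt (β j) := fun j => Real.sqrt_pos.mpr (hβ j)
  -- symmetry of I
  have hIsym : ∀ (lam : ℝ) (i j : Fin N), I lam (X i - X j) = I lam (X j - X i) := by
    intro lam i j
    rw [hI, hI]
    congr 1
    refine integral_congr_ae (Filter.Eventually.of_forall fun θ => ?_)
    dsimp only
    rw [sumSub_aux X θ j i, sumSub_aux X θ i j,
      show (∑ k, θ k * (X i k : ℝ)) - (∑ k, θ k * (X j k : ℝ))
        = -((∑ k, θ k * (X j k : ℝ)) - (∑ k, θ k * (X i k : ℝ))) by ring,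
      Real.cos_neg]
  -- quadratic form of S
  have hquadS : ∀ (lam : ℝ) (x : Fin N → ℝ), x ⬝ᵥ (S lam *ᵥ x) =
      ((2 * Real.pi)^d)⁻¹ * ∑ i, ∑ j,
        (Real.sqrt (β i) * x i) * (Real.sqrt (β j) * x j) *
        ∫ θ in Set.Icc (fun _ : Fin d => -Real.pi) (fun _ : Fin d => Real.pi),
          Real.cos (∑ k, θ k * ((X j - X i) k : ℝ)) * (lam - phi θ)⁻¹ := by
    intro lam x
    simp only [dotProduct, Matrix.mulVec, hSapp, hIw lam]
    rw [Finset.mul_sum]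
    refine Finset.sum_congr rfl fun i _ => ?_
    rw [Finset.mul_sum, Finset.mul_sum]
    refine Finset.sum_congr rfl fun j _ => ?_
    ring
  -- positive definiteness
  have hSpos : ∀ lam : ℝ, 0 < lam → (S lam).PosDef := by
    intro lam hlam
    refine Matrix.PosDef.of_dotProduct_mulVec_pos ?_ ?_
    · show (S lam)ᴴ = S lam
      ext i j
      simp only [Matrix.conjTranspose_apply, hSapp, star_trivial]
      rw [hIsym lam i j]
      ring
    · intro x hx
      have hstar : star x = x := by
        funext i; exact star_trivial _
      rw [hstar, hquadS lam x]
      have hlow := quadLower'_aux X hX (fun θ => (lam - phi θ)⁻¹) (hwcont lam hlam)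
        ((lam + K)⁻¹) (le_of_lt (inv_pos.mpr (by linarith)))
        (fun θ _ => by
          have h1 := hden lam hlam θ
          have h2 := hdenle lam θ
          exact inv_anti₀ h1 h2)
        (fun i => Real.sqrt (β i) * x i)
      refine lt_of_lt_of_le ?_ hlow
      have hex : ∃ i, x i ≠ 0 := Function.ne_iff.mp hx
      obtain ⟨i, hi⟩ := hex
      have hne : Real.sqrt (β i) * x i ≠ 0 := mul_ne_zero (hsqβpos i).ne' hi
      have hpos2 : 0 < (Real.sqrt (β i) * x i)^2 :=
        lt_of_le_of_ne (sq_nonneg _) (Ne.symm (pow_ne_zero 2 hne))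
      have hsumpos : 0 < ∑ i, (Real.sqrt (β i) * x i)^2 :=
        Finset.sum_pos' (fun j _ => sq_nonneg _) ⟨i, Finset.mem_univ i, hpos2⟩
      have hKpos : 0 < (lam + K)⁻¹ := inv_pos.mpr (by linarith)
      exact mul_pos hKpos hsumpos
  -- similarity between G and S
  obtain ⟨u, hu⟩ : ∃ u : (Matrix (Fin N) (Fin N) ℝ)ˣ,
      ∀ lam, (u : Matrix (Fin N) (Fin N) ℝ) * G lam *
        ((u⁻¹ : (Matrix (Fin N) (Fin N) ℝ)ˣ) : Matrix (Fin N) (Fin N) ℝ) = S lam := by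
    have hdiag : (Matrix.diagonal fun i => Real.sqrt (β i)) *
        (Matrix.diagonal fun i => (Real.sqrt (β i))⁻¹) = 1 := by
      rw [Matrix.diagonal_mul_diagonal]
      rw [show (fun i => Real.sqrt (β i) * (Real.sqrt (β i))⁻¹) = fun _ => (1:ℝ) from
        funext fun i => mul_inv_cancel₀ (hsqβpos i).ne']
      exact Matrix.diagonal_one
    have hdiag' : (Matrix.diagonal fun i => (Real.sqrt (β i))⁻¹) *
        (Matrix.diagonal fun i => Real.sqrt (β i)) = 1 := by
      rw [Matrix.diagonal_mul_diagonal]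
      rw [show (fun i => (Real.sqrt (β i))⁻¹ * Real.sqrt (β i)) = fun _ => (1:ℝ) from
        funext fun i => inv_mul_cancel₀ (hsqβpos i).ne']
      exact Matrix.diagonal_one
    refine ⟨⟨Matrix.diagonal fun i => Real.sqrt (β i),
      Matrix.diagonal fun i => (Real.sqrt (β i))⁻¹, hdiag, hdiag'⟩, fun lam => ?_⟩
    ext i j
    show ((Matrix.diagonal fun i => Real.sqrt (β i)) * G lam *
      (Matrix.diagonal fun i => (Real.sqrt (β i))⁻¹)) i j = S lam i j
    rw [Matrix.mul_diagonal, Matrix.diagonal_mul, hG, hSapp]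
    have hb : β j * (Real.sqrt (β j))⁻¹ = Real.sqrt (β j) := by
      rw [mul_inv_eq_iff_eq_mul₀ (hsqβpos j).ne', hsqβ j]
    calc Real.sqrt (β i) * (β j * I lam (X j - X i)) * (Real.sqrt (β j))⁻¹
        = Real.sqrt (β i) * (β j * (Real.sqrt (β j))⁻¹) * I lam (X j - X i) := by ring
      _ = Real.sqrt (β i) * Real.sqrt (β j) * I lam (X j - X i) := by rw [hb]
  have hspecR : ∀ lam, spectrum ℝ (G lam) = spectrum ℝ (S lam) := by
    intro lam
    rw [← hu lam, spectrum.units_conjugate]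
  have hradeq : ∀ lam, spectralRadius ℂ ((G lam).map (fun r => (r : ℂ))) =
      spectralRadius ℂ ((S lam).map (fun r => (r : ℂ))) := by
    intro lam
    set f : Matrix (Fin N) (Fin N) ℝ →+* Matrix (Fin N) (Fin N) ℂ :=
      (Complex.ofRealHom.mapMatrix)
    set uc : (Matrix (Fin N) (Fin N) ℂ)ˣ := Units.map f.toMonoidHom u with huc
    have h1 : ((S lam).map (fun r => (r : ℂ))) = f (S lam) := rfl
    have h2 : ((G lam).map (fun r => (r : ℂ))) = f (G lam) := rfl
    have h3 : f (S lam) = (uc : Matrix (Fin N) (Fin N) ℂ) * f (G lam) *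
        ((uc⁻¹ : (Matrix (Fin N) (Fin N) ℂ)ˣ) : Matrix (Fin N) (Fin N) ℂ) := by
      rw [← hu lam, _root_.map_mul, _root_.map_mul]
      congr 1
    have hs : spectrum ℂ ((S lam).map (fun r => (r : ℂ))) =
        spectrum ℂ ((G lam).map (fun r => (r : ℂ))) := by
      rw [h1, h2, h3, spectrum.units_conjugate]
    rw [spectralRadius, spectralRadius, hs]
  have hγS : ∀ lam, γ lam = (spectralRadius ℂ ((S lam).map (fun r => (r : ℂ)))).toReal := by
    intro lam
    rw [hγ lam, hradeq lam]
  -- the strict monotonicity quadratic bound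
  have hdiffQ : ∀ lam1 lam2 : ℝ, 0 < lam1 → lam1 < lam2 → ∀ x : Fin N → ℝ,
      ((lam2 - lam1) / ((lam1 + K) * (lam2 + K))) * ∑ i, (Real.sqrt (β i) * x i)^2 ≤
        x ⬝ᵥ (S lam1 *ᵥ x) - x ⬝ᵥ (S lam2 *ᵥ x) := by
    intro lam1 lam2 hlam1 hlt x
    have hlam2 : 0 < lam2 := lt_trans hlam1 hlt
    have hkey : ∀ i j : Fin N,
        (∫ θ in Set.Icc (fun _ : Fin d => -Real.pi) (fun _ : Fin d => Real.pi),
          Real.cos (∑ k, θ k * ((X j - X i) k : ℝ)) * (lam1 - phi θ)⁻¹) -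
        (∫ θ in Set.Icc (fun _ : Fin d => -Real.pi) (fun _ : Fin d => Real.pi),
          Real.cos (∑ k, θ k * ((X j - X i) k : ℝ)) * (lam2 - phi θ)⁻¹) =
        ∫ θ in Set.Icc (fun _ : Fin d => -Real.pi) (fun _ : Fin d => Real.pi),
          Real.cos (∑ k, θ k * ((X j - X i) k : ℝ)) *
            ((lam1 - phi θ)⁻¹ - (lam2 - phi θ)⁻¹) := by
      intro i j
      have hcos : Continuous fun θ : Fin d → ℝ =>
          Real.cos (∑ k, θ k * ((X j - X i) k : ℝ)) :=
        Real.continuous_cos.comp (continuous_finset_sum _ fun k _ =>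
          (continuous_apply k).mul continuous_const)
      rw [← integral_sub ((hcos.fun_mul (hwcont lam1 hlam1)).integrableOn_Icc)
        ((hcos.fun_mul (hwcont lam2 hlam2)).integrableOn_Icc)]
      simp only [mul_sub]
    rw [hquadS, hquadS, ← mul_sub, ← Finset.sum_sub_distrib]
    simp_rw [← Finset.sum_sub_distrib, ← mul_sub]
    simp_rw [hkey]
    refine quadLower'_aux X hX (fun θ => (lam1 - phi θ)⁻¹ - (lam2 - phi θ)⁻¹)
      ((hwcont lam1 hlam1).sub (hwcont lam2 hlam2))
      ((lam2 - lam1) / ((lam1 + K) * (lam2 + K)))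
      (div_nonneg (by linarith) (le_of_lt (mul_pos (by linarith) (by linarith))))
      (fun θ _ => ?_) _
    have h1 := hden lam1 hlam1 θ
    have h2 := hden lam2 hlam2 θ
    have e : (lam1 - phi θ)⁻¹ - (lam2 - phi θ)⁻¹
        = (lam2 - lam1) / ((lam1 - phi θ) * (lam2 - phi θ)) := by
      rw [inv_sub_inv h1.ne' h2.ne']; congr 1; ring
    rw [e]
    apply div_le_div_of_nonneg_left (by linarith) (mul_pos h1 h2)
    exact mul_le_mul (hdenle lam1 θ) (hdenle lam2 θ) h2.le (by linarith)
  -- assembling part 1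
  refine ⟨?_, ?_, ?_⟩
  · intro lam hlam
    obtain ⟨μ, hμ0, hμrad, hμspec, -, -⟩ := aux_spec hN (S lam) (hSpos lam hlam)
    rw [hγS lam, hμrad, hspecR lam]
    exact hμspec
  · -- strict antitonicity
    intro lam1 hlam1 lam2 hlam2 hlt
    simp only [Set.mem_Ioi] at hlam1 hlam2
    obtain ⟨μ1, hμ10, hμ1rad, -, -, hray1⟩ := aux_spec hN (S lam1) (hSpos lam1 hlam1)
    obtain ⟨μ2, hμ20, hμ2rad, -, ⟨v2, hv21, hv22⟩, -⟩ := aux_spec hN (S lam2) (hSpos lam2 hlam2)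
    rw [hγS lam1, hγS lam2, hμ1rad, hμ2rad]
    -- show μ2 < μ1
    have hdiff := hdiffQ lam1 lam2 hlam1 hlt v2
    have hb1 : v2 ⬝ᵥ (S lam1 *ᵥ v2) ≤ μ1 := by
      have := hray1 v2
      rw [hv21, mul_one] at this
      exact this
    have hv2ne : ∃ i, v2 i ≠ 0 := by
      by_contra h
      push_neg at h
      have : v2 ⬝ᵥ v2 = 0 := by
        simp [dotProduct, h]
      rw [hv21] at this
      norm_num at this
    obtain ⟨i, hi⟩ := hv2ne
    have hne : Real.sqrt (β i) * v2 i ≠ 0 := mul_ne_zero (hsqβpos i).ne' hi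
    have hpos2 : 0 < (Real.sqrt (β i) * v2 i)^2 :=
      lt_of_le_of_ne (sq_nonneg _) (Ne.symm (pow_ne_zero 2 hne))
    have hsumpos : 0 < ∑ i, (Real.sqrt (β i) * v2 i)^2 :=
      Finset.sum_pos' (fun j _ => sq_nonneg _) ⟨i, Finset.mem_univ i, hpos2⟩
    have hmpos : 0 < (lam2 - lam1) / ((lam1 + K) * (lam2 + K)) :=
      div_pos (by linarith) (mul_pos (by linarith) (by linarith))
    have : 0 < ((lam2 - lam1) / ((lam1 + K) * (lam2 + K))) * ∑ i, (Real.sqrt (β i) * v2 i)^2 :=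
      mul_pos hmpos hsumpos
    linarith [hv22]
  · -- continuity
    -- Lipschitz bound for I
    have hvolB : (volume (Set.Icc (fun _ : Fin d => -Real.pi)
        (fun _ : Fin d => Real.pi))).toReal = (2 * Real.pi)^d := by
      rw [← Set.pi_univ_Icc, volume_pi_pi]
      simp only [Real.volume_Icc]
      rw [Finset.prod_const, Finset.card_univ, Fintype.card_fin]
      rw [ENNReal.toReal_pow, ENNReal.toReal_ofReal (by linarith)]
      congr 1
      ring
    have hvolBfin : volume (Set.Icc (fun _ : Fin d => -Real.pi)
        (fun _ : Fin d => Real.pi)) < ⊤ := by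
      rw [← Set.pi_univ_Icc, volume_pi_pi]
      simp only [Real.volume_Icc]
      rw [Finset.prod_const]
      exact ENNReal.pow_lt_top ENNReal.ofReal_lt_top
    have hIlip : ∀ m0 : ℝ, 0 < m0 → ∀ lam1 lam2 : ℝ, m0 ≤ lam1 → m0 ≤ lam2 → ∀ x : Fin d → ℤ,
        |I lam1 x - I lam2 x| ≤ |lam1 - lam2| / m0^2 := by
      intro m0 hm0 lam1 lam2 h1 h2 x
      have hlam1 : 0 < lam1 := lt_of_lt_of_le hm0 h1
      have hlam2 : 0 < lam2 := lt_of_lt_of_le hm0 h2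
      have hcos : Continuous fun θ : Fin d → ℝ => Real.cos (∑ i, θ i * (x i : ℝ)) :=
        Real.continuous_cos.comp (continuous_finset_sum _ fun k _ =>
          (continuous_apply k).mul continuous_const)
      have hdiffI : I lam1 x - I lam2 x = ((2 * Real.pi)^d)⁻¹ *
          ∫ θ in Set.Icc (fun _ : Fin d => -Real.pi) (fun _ : Fin d => Real.pi),
            Real.cos (∑ i, θ i * (x i : ℝ)) * ((lam1 - phi θ)⁻¹ - (lam2 - phi θ)⁻¹) := by
        rw [hIw, hIw, ← mul_sub,
          ← integral_sub ((hcos.fun_mul (hwcont lam1 hlam1)).integrableOn_Icc)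
            ((hcos.fun_mul (hwcont lam2 hlam2)).integrableOn_Icc)]
        simp only [mul_sub]
      rw [hdiffI, abs_mul, abs_of_nonneg (le_of_lt (inv_pos.mpr h2πd))]
      have hbound : ‖∫ θ in Set.Icc (fun _ : Fin d => -Real.pi) (fun _ : Fin d => Real.pi),
          Real.cos (∑ i, θ i * (x i : ℝ)) * ((lam1 - phi θ)⁻¹ - (lam2 - phi θ)⁻¹)‖ ≤
          (|lam1 - lam2| / m0^2) *
            (volume (Set.Icc (fun _ : Fin d => -Real.pi) (fun _ : Fin d => Real.pi))).toReal := by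
        refine norm_setIntegral_le_of_norm_le_const hvolBfin (fun θ hθ => ?_)
        have hd1 : 0 < lam1 - phi θ := hden lam1 hlam1 θ
        have hd2 : 0 < lam2 - phi θ := hden lam2 hlam2 θ
        have hd1' : m0 ≤ lam1 - phi θ := by have := hphile θ; linarith
        have hd2' : m0 ≤ lam2 - phi θ := by have := hphile θ; linarith
        have e : (lam1 - phi θ)⁻¹ - (lam2 - phi θ)⁻¹
            = (lam2 - lam1) / ((lam1 - phi θ) * (lam2 - phi θ)) := by
          rw [inv_sub_inv hd1.ne' hd2.ne']; congr 1; ring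
        rw [Real.norm_eq_abs, abs_mul, e, abs_div]
        have hnum : |lam2 - lam1| = |lam1 - lam2| := abs_sub_comm _ _
        have hden2 : |(lam1 - phi θ) * (lam2 - phi θ)| = (lam1 - phi θ) * (lam2 - phi θ) :=
          abs_of_pos (mul_pos hd1 hd2)
        have hge : m0^2 ≤ (lam1 - phi θ) * (lam2 - phi θ) := by
          rw [pow_two]
          exact mul_le_mul hd1' hd2' hm0.le hd1.le
        calc |Real.cos (∑ i, θ i * (x i : ℝ))| *
              (|lam2 - lam1| / |(lam1 - phi θ) * (lam2 - phi θ)|)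
            ≤ 1 * (|lam2 - lam1| / |(lam1 - phi θ) * (lam2 - phi θ)|) :=
              mul_le_mul_of_nonneg_right (Real.abs_cos_le_one _)
                (div_nonneg (abs_nonneg _) (abs_nonneg _))
          _ = |lam1 - lam2| / ((lam1 - phi θ) * (lam2 - phi θ)) := by
              rw [one_mul, hnum, hden2]
          _ ≤ |lam1 - lam2| / m0^2 :=
              div_le_div_of_nonneg_left (abs_nonneg _) (by positivity) hge
      calc ((2 * Real.pi)^d)⁻¹ *
            |∫ θ in Set.Icc (fun _ : Fin d => -Real.pi) (fun _ : Fin d => Real.pi),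
              Real.cos (∑ i, θ i * (x i : ℝ)) * ((lam1 - phi θ)⁻¹ - (lam2 - phi θ)⁻¹)|
          ≤ ((2 * Real.pi)^d)⁻¹ * ((|lam1 - lam2| / m0^2) * (2 * Real.pi)^d) := by
            apply mul_le_mul_of_nonneg_left _ (le_of_lt (inv_pos.mpr h2πd))
            rw [← hvolB]
            exact hbound
        _ = |lam1 - lam2| / m0^2 := by
            field_simp
    -- Lipschitz bound for γ
    set Cβ : ℝ := ∑ i : Fin N, ∑ j : Fin N, Real.sqrt (β i) * Real.sqrt (β j) with hCβ
    have hCβ0 : 0 ≤ Cβ := Finset.sum_nonneg fun i _ => Finset.sum_nonneg fun j _ =>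
      mul_nonneg (Real.sqrt_nonneg _) (Real.sqrt_nonneg _)
    have hexp : ∀ (lam : ℝ) (v : Fin N → ℝ), v ⬝ᵥ (S lam *ᵥ v) =
        ∑ i, ∑ j, v i * (S lam i j * v j) := by
      intro lam v
      simp only [dotProduct, Matrix.mulVec]
      exact Finset.sum_congr rfl fun i _ => Finset.mul_sum _ _ _
    have hγlip : ∀ m0 : ℝ, 0 < m0 → ∀ lam1 lam2 : ℝ, m0 ≤ lam1 → m0 ≤ lam2 →
        γ lam1 - γ lam2 ≤ Cβ * (|lam1 - lam2| / m0^2) := by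
      intro m0 hm0 lam1 lam2 h1 h2
      have hlam1 : 0 < lam1 := lt_of_lt_of_le hm0 h1
      have hlam2 : 0 < lam2 := lt_of_lt_of_le hm0 h2
      obtain ⟨μ1, hμ10, hμ1rad, -, ⟨v1, hv11, hv12⟩, -⟩ := aux_spec hN (S lam1) (hSpos lam1 hlam1)
      obtain ⟨μ2, hμ20, hμ2rad, -, -, hray2⟩ := aux_spec hN (S lam2) (hSpos lam2 hlam2)
      rw [hγS lam1, hγS lam2, hμ1rad, hμ2rad]
      have hb2 : v1 ⬝ᵥ (S lam2 *ᵥ v1) ≤ μ2 := by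
        have := hray2 v1
        rw [hv11, mul_one] at this
        exact this
      have hvbd : ∀ i, |v1 i| ≤ 1 := by
        intro i
        rw [abs_le_one_iff_mul_self_le_one]
        calc v1 i * v1 i ≤ ∑ j, v1 j * v1 j :=
              Finset.single_le_sum (fun j _ => mul_self_nonneg (v1 j)) (Finset.mem_univ i)
          _ = 1 := hv11
      have hdiffbd : v1 ⬝ᵥ (S lam1 *ᵥ v1) - v1 ⬝ᵥ (S lam2 *ᵥ v1) ≤ Cβ * (|lam1 - lam2| / m0^2) := by
        rw [hexp lam1 v1, hexp lam2 v1, ← Finset.sum_sub_distrib]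
        simp_rw [← Finset.sum_sub_distrib]
        have hterm : ∀ i j : Fin N,
            v1 i * (S lam1 i j * v1 j) - v1 i * (S lam2 i j * v1 j) ≤
            Real.sqrt (β i) * Real.sqrt (β j) * (|lam1 - lam2| / m0^2) := by
          intro i j
          have e : v1 i * (S lam1 i j * v1 j) - v1 i * (S lam2 i j * v1 j)
              = v1 i * (S lam1 i j - S lam2 i j) * v1 j := by ring
          rw [e]
          have hSd : S lam1 i j - S lam2 i j =
              Real.sqrt (β i) * Real.sqrt (β j) *
                (I lam1 (X j - X i) - I lam2 (X j - X i)) := by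
            rw [hSapp, hSapp]; ring
          calc v1 i * (S lam1 i j - S lam2 i j) * v1 j
              ≤ |v1 i * (S lam1 i j - S lam2 i j) * v1 j| := le_abs_self _
            _ = |v1 i| * |S lam1 i j - S lam2 i j| * |v1 j| := by
                rw [abs_mul, abs_mul]
            _ ≤ 1 * |S lam1 i j - S lam2 i j| * 1 := by
                apply mul_le_mul (mul_le_mul (hvbd i) le_rfl (abs_nonneg _) zero_le_one)
                  (hvbd j) (abs_nonneg _)
                exact mul_nonneg zero_le_one (abs_nonneg _)
            _ = |S lam1 i j - S lam2 i j| := by ring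
            _ ≤ Real.sqrt (β i) * Real.sqrt (β j) * (|lam1 - lam2| / m0^2) := by
                rw [hSd, abs_mul, abs_of_nonneg
                  (mul_nonneg (Real.sqrt_nonneg _) (Real.sqrt_nonneg _))]
                exact mul_le_mul_of_nonneg_left
                  (hIlip m0 hm0 lam1 lam2 h1 h2 (X j - X i))
                  (mul_nonneg (Real.sqrt_nonneg _) (Real.sqrt_nonneg _))
        calc ∑ i, ∑ j, (v1 i * (S lam1 i j * v1 j) - v1 i * (S lam2 i j * v1 j))
            ≤ ∑ i, ∑ j, Real.sqrt (β i) * Real.sqrt (β j) * (|lam1 - lam2| / m0^2) :=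
              Finset.sum_le_sum fun i _ => Finset.sum_le_sum fun j _ => hterm i j
          _ = Cβ * (|lam1 - lam2| / m0^2) := by
              rw [hCβ, Finset.sum_mul]
              exact Finset.sum_congr rfl fun i _ => by rw [Finset.sum_mul]
      linarith [hv12]
    -- conclude continuity
    intro lam0 hlam0
    simp only [Set.mem_Ioi] at hlam0
    have hm0 : 0 < lam0 / 2 := by linarith
    have hlip : LipschitzOnWith (Real.toNNReal (Cβ / (lam0/2)^2)) γ (Set.Ici (lam0/2)) := by
      apply LipschitzOnWith.of_dist_le_mul
      intro x hx y hy
      rw [Set.mem_Ici] at hx hy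
      rw [Real.dist_eq, Real.dist_eq]
      have h1 := hγlip (lam0/2) hm0 x y hx hy
      have h2 := hγlip (lam0/2) hm0 y x hy hx
      rw [abs_sub_comm y x] at h2
      have habs : |γ x - γ y| ≤ Cβ * (|x - y| / (lam0/2)^2) := abs_sub_le_iff.mpr ⟨h1, h2⟩
      calc |γ x - γ y| ≤ Cβ * (|x - y| / (lam0/2)^2) := habs
        _ = (Cβ / (lam0/2)^2) * |x - y| := by ring
        _ = (Real.toNNReal (Cβ / (lam0/2)^2) : ℝ) * |x - y| := by
            rw [Real.coe_toNNReal _ (div_nonneg hCβ0 (by positivity))]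
    have hmem : lam0 ∈ Set.Ici (lam0/2) := by
      rw [Set.mem_Ici]; linarith
    have hnhds : Set.Ici (lam0/2) ∈ nhds lam0 := Ici_mem_nhds (by linarith)
    exact (((hlip.continuousOn.continuousWithinAt hmem).continuousAt hnhds)).continuousWithinAt
end
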